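/- arXiv:1903.06208 — 3 statements merged into one kernel-verified Lean document; each statement's English description precedes it below -/
import Mathlib

section
/- Let w be a weight on ℝ², let 1 < p < ∞ and let δ ∈ (0,1). Suppose the maximal operator M_{4δ} is bounded on L^p(w), i.e. there is a constant C with ‖M_{4δ} f‖_{L^p(w)} ≤ C‖f‖_{L^p(w)} for all f ∈ L^p(w). Then w belongs to the skeleton class 𝒜^S_p at scale δ: the supremum over all x ∈ ℝ² and r ∈ [1,2] of (|S_δ(x,r)|^{−1} ∫_{Q_δ(x)} w dx)·(⨍_{ℓ_δ(x,r)} w^{−p'/p} dx)^p·(⨍_{S_δ(x,r)} w^{−p'/p} dx)^{−1} is finite. -/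
open MeasureTheory Metric Set
open scoped ENNReal NNReal

noncomputable section

/-- Index of a `k`-face of an axis-parallel cube in `ℝⁿ`: a set of `k` "free" coordinates
together with a sign choice for the remaining coordinates (only the signs of coordinates
outside the free set matter). -/
abbrev FaceIdx (n k : ℕ) := {T : Finset (Fin n) // T.card = k} × (Fin n → Bool)

/-- The `k`-face of the axis-parallel cube centered at `x` with side length `2 r`
corresponding to the face index `F`. -/
def kFace {n : ℕ} (k : ℕ) (x : Fin n → ℝ) (r : ℝ) (F : FaceIdx n k) : Set (Fin n → ℝ) :=
  {y | (∀ i ∈ F.1.1, |y i - x i| ≤ r) ∧ ∀ i ∉ F.1.1, y i = x i + (if F.2 i then r else -r)}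

/-- The `δ`-neighborhood of a `k`-face. -/
def faceNbhd {n : ℕ} (k : ℕ) (δ : ℝ) (x : Fin n → ℝ) (r : ℝ) (F : FaceIdx n k) :
    Set (Fin n → ℝ) :=
  Metric.cthickening δ (kFace k x r F)

/-- The `δ`-neighborhood of the whole `k`-skeleton. -/
def skelNbhd {n : ℕ} (k : ℕ) (δ : ℝ) (x : Fin n → ℝ) (r : ℝ) : Set (Fin n → ℝ) :=
  ⋃ F : FaceIdx n k, faceNbhd k δ x r F

/-- The `k`-skeleton maximal function with width `δ` (with values in `ℝ≥0∞`):
`M^k_δ f (x) = sup_{1 ≤ r ≤ 2} min_j ⨍_{S^j_{k,δ}(x,r)} |f|`. -/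
def skelMax (n k : ℕ) (δ : ℝ) (f : (Fin n → ℝ) → ℝ) (x : Fin n → ℝ) : ℝ≥0∞ :=
  ⨆ r ∈ Set.Icc (1 : ℝ) 2, ⨅ F : FaceIdx n k,
    (volume (faceNbhd k δ x r F))⁻¹ * ∫⁻ y in faceNbhd k δ x r F, (‖f y‖₊ : ℝ≥0∞)

/-- `L^p` norm of an `ℝ≥0∞`-valued function. -/
def lpNormE {α : Type*} [MeasurableSpace α] (g : α → ℝ≥0∞) (p : ℝ) (μ : Measure α) : ℝ≥0∞ :=
  (∫⁻ x, g x ^ p ∂μ) ^ (1 / p)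

/-- The measure `w(x) dx` associated to a weight `w`. -/
def wMeasure {n : ℕ} (w : (Fin n → ℝ) → ℝ) : Measure (Fin n → ℝ) :=
  volume.withDensity fun x => ENNReal.ofReal (w x)

/-- Average of `g` over the set `A` (with respect to Lebesgue measure). -/
def ravg {n : ℕ} (A : Set (Fin n → ℝ)) (g : (Fin n → ℝ) → ℝ) : ℝ :=
  (volume A).toReal⁻¹ * ∫ y in A, g y

/-- The axis-parallel cube with center `c` and side length `s`. -/
def cube {n : ℕ} (c : Fin n → ℝ) (s : ℝ) : Set (Fin n → ℝ) :=
  {y | ∀ j, |y j - c j| ≤ s / 2}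

/-- The closed unit cube `Q_z` with lower-left vertex `z`. -/
def unitCube {n : ℕ} (z : Fin n → ℤ) : Set (Fin n → ℝ) :=
  {y | ∀ j, (z j : ℝ) ≤ y j ∧ y j ≤ (z j : ℝ) + 1}

/-- The cube `7 Q_z`: same center as `Q_z`, side length `7`. -/
def sevenCube {n : ℕ} (z : Fin n → ℤ) : Set (Fin n → ℝ) :=
  {y | ∀ j, |y j - ((z j : ℝ) + 1 / 2)| ≤ 7 / 2}

/-- The (half-open) grid cell `Q_z(m)` of side length `δ = 1/N` inside `Q_z`. -/
def gridCell {n : ℕ} (N : ℕ) (z : Fin n → ℤ) (m : Fin n → Fin N) : Set (Fin n → ℝ) :=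
  {y | ∀ j, (z j : ℝ) + (m j : ℝ) / N ≤ y j ∧ y j < (z j : ℝ) + ((m j : ℝ) + 1) / N}

/-- The center `x_m` of the grid cell `Q_z(m)`. -/
def gridCenter {n : ℕ} (N : ℕ) (z : Fin n → ℤ) (m : Fin n → Fin N) : Fin n → ℝ :=
  fun j => (z j : ℝ) + ((m j : ℝ) + 1 / 2) / N

/-- Membership in `Γ`: a radius function with values in `[1,2] ∩ δ ℤ`, `δ = 1/N`. -/
def inGamma {n : ℕ} (N : ℕ) (ρ : (Fin n → Fin N) → ℝ) : Prop :=
  ∀ m, ρ m ∈ Set.Icc (1 : ℝ) 2 ∧ ∃ t : ℤ, ρ m = (t : ℝ) / N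

/-- The `δ'`-neighborhood `ℓ_m` of the selected `k`-face of the skeleton
`S_k(x_m, ρ(x_m))`. -/
def selFace {n : ℕ} (k N : ℕ) (z : Fin n → ℤ) (ρ : (Fin n → Fin N) → ℝ)
    (sel : (Fin n → Fin N) → FaceIdx n k) (δ' : ℝ) (m : Fin n → Fin N) : Set (Fin n → ℝ) :=
  Metric.cthickening δ' (kFace k (gridCenter N z m) (ρ m) (sel m))

/-- The linearized `k`-skeleton maximal operator: on the cell `Q_z(m)` it equals the
average of `f` over the `δ'`-neighborhood of the selected face. -/
def linMax {n : ℕ} (k N : ℕ) (z : Fin n → ℤ) (ρ : (Fin n → Fin N) → ℝ)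
    (sel : (Fin n → Fin N) → FaceIdx n k) (δ' : ℝ) (f : (Fin n → ℝ) → ℝ)
    (x : Fin n → ℝ) : ℝ :=
  ∑ m : Fin n → Fin N, Set.indicator (gridCell N z m)
    (fun _ => (volume (selFace k N z ρ sel δ' m)).toReal⁻¹ *
      ∫ y in selFace k N z ρ sel δ' m, f y) x

/-- The local skeleton `A_p` constant `[w]_{A^{S_k}_{p,ρ,z}}` (for `1 < p < ∞`). -/
def ApLoc {n : ℕ} (k N : ℕ) (z : Fin n → ℤ) (ρ : (Fin n → Fin N) → ℝ)
    (sel : (Fin n → Fin N) → FaceIdx n k) (w : (Fin n → ℝ) → ℝ) (p : ℝ) : ℝ≥0∞ :=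
  ⨆ m : Fin n → Fin N,
    ((volume (selFace k N z ρ sel ((N : ℝ)⁻¹) m))⁻¹ *
        ∫⁻ y in gridCell N z m, ENNReal.ofReal (w y)) *
      ((volume (selFace k N z ρ sel ((N : ℝ)⁻¹) m))⁻¹ *
        ∫⁻ y in selFace k N z ρ sel ((N : ℝ)⁻¹) m,
          ENNReal.ofReal (w y) ^ (1 - p / (p - 1))) ^ (p - 1)

/-- The local skeleton `A_1` constant `[w]_{A^{S_k}_{1,ρ,z}}`. -/
def A1Loc {n : ℕ} (k N : ℕ) (z : Fin n → ℤ) (ρ : (Fin n → Fin N) → ℝ)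
    (sel : (Fin n → Fin N) → FaceIdx n k) (w : (Fin n → ℝ) → ℝ) : ℝ≥0∞ :=
  ⨆ m : Fin n → Fin N,
    ((volume (selFace k N z ρ sel ((N : ℝ)⁻¹) m))⁻¹ *
        ∫⁻ y in gridCell N z m, ENNReal.ofReal (w y)) *
      essSup (fun y => (ENNReal.ofReal (w y))⁻¹)
        (volume.restrict (selFace k N z ρ sel ((N : ℝ)⁻¹) m))

/-- The global skeleton `A_p` constant `[w]_{A^{S_k}_p}` (with the `A_1` version at `p = 1`). -/
def ApGlobal {n : ℕ} (k N : ℕ)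
    (sel : (Fin n → ℤ) → ((Fin n → Fin N) → ℝ) → (Fin n → Fin N) → FaceIdx n k)
    (w : (Fin n → ℝ) → ℝ) (p : ℝ) : ℝ≥0∞ :=
  if p = 1 then
    ⨆ z : Fin n → ℤ, ⨆ ρ : {ρ : (Fin n → Fin N) → ℝ // inGamma N ρ},
      A1Loc k N z ρ.1 (sel z ρ.1) w
  else
    ⨆ z : Fin n → ℤ, ⨆ ρ : {ρ : (Fin n → Fin N) → ℝ // inGamma N ρ},
      ApLoc k N z ρ.1 (sel z ρ.1) w p


namespace SkelNec

def oidx (i : Fin 2) : Fin 2 := if i = 0 then 1 else 0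

lemma oidx_ne (i : Fin 2) : oidx i ≠ i := by fin_cases i <;> simp [oidx]

lemma eq_oidx_of_ne {l i : Fin 2} (h : l ≠ i) : l = oidx i := by
  fin_cases i <;> fin_cases l <;> simp_all [oidx]

lemma mem_kFace_iff {x : Fin 2 → ℝ} {r : ℝ} {F : FaceIdx 2 1} {i : Fin 2}
    (hi : F.1.1 = {i}) {y : Fin 2 → ℝ} :
    y ∈ kFace 1 x r F ↔ |y i - x i| ≤ r ∧
      y (oidx i) = x (oidx i) + (if F.2 (oidx i) then r else -r) := by
  constructor
  · rintro ⟨h1, h2⟩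
    exact ⟨h1 i (by simp [hi]), h2 (oidx i) (by simp [hi, oidx_ne i])⟩
  · rintro ⟨h1, h2⟩
    refine ⟨?_, ?_⟩
    · intro l hl
      rw [hi, Finset.mem_singleton] at hl
      subst hl; exact h1
    · intro l hl
      rw [hi, Finset.mem_singleton] at hl
      have hl' : l = oidx i := eq_oidx_of_ne hl
      subst hl'; exact h2

def boxP (c e : Fin 2 → ℝ) : Set (Fin 2 → ℝ) :=
  Set.pi Set.univ fun l => Set.Icc (c l - e l) (c l + e l)

lemma mem_boxP {c e z : Fin 2 → ℝ} : z ∈ boxP c e ↔ ∀ l, |z l - c l| ≤ e l := by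
  simp only [boxP, Set.mem_pi, Set.mem_univ, forall_true_left, Set.mem_Icc, abs_sub_le_iff]
  refine forall_congr' fun l => ?_
  constructor <;> rintro ⟨h1, h2⟩ <;> constructor <;> linarith

lemma volume_boxP (c e : Fin 2 → ℝ) :
    volume (boxP c e) = ENNReal.ofReal (2 * e 0) * ENNReal.ofReal (2 * e 1) := by
  rw [boxP, volume_pi_pi]
  rw [Fin.prod_univ_two]
  simp only [Real.volume_Icc]
  rw [show c 0 + e 0 - (c 0 - e 0) = 2 * e 0 by ring,
    show c 1 + e 1 - (c 1 - e 1) = 2 * e 1 by ring]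

lemma volume_boxP_update (c : Fin 2 → ℝ) (i : Fin 2) (s t : ℝ) :
    volume (boxP c (Function.update (fun _ => t) i s)) =
      ENNReal.ofReal (2 * s) * ENNReal.ofReal (2 * t) := by
  rw [volume_boxP]
  fin_cases i <;> simp [Function.update] <;> rw [mul_comm]

lemma cube_eq_boxP (x : Fin 2 → ℝ) (s : ℝ) : cube x s = boxP x (fun _ => s / 2) := by
  ext z
  simp [cube, mem_boxP]

lemma isCompact_boxP (c e : Fin 2 → ℝ) : IsCompact (boxP c e) :=
  isCompact_univ_pi fun _ => isCompact_Icc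

lemma measurableSet_faceNbhd {δ : ℝ} {x : Fin 2 → ℝ} {r : ℝ} {F : FaceIdx 2 1} :
    MeasurableSet (faceNbhd 1 δ x r F) :=
  (Metric.isClosed_cthickening).measurableSet

lemma measurableSet_skelNbhd {δ : ℝ} {x : Fin 2 → ℝ} {r : ℝ} :
    MeasurableSet (skelNbhd 1 δ x r) :=
  MeasurableSet.iUnion fun _ => measurableSet_faceNbhd

lemma boxP_subset_faceNbhd {x : Fin 2 → ℝ} {r δ : ℝ} (hδ : 0 ≤ δ) {F : FaceIdx 2 1}
    {i : Fin 2} (hi : F.1.1 = {i}) :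
    boxP (Function.update x (oidx i) (x (oidx i) + (if F.2 (oidx i) then r else -r)))
      (Function.update (fun _ => δ) i r) ⊆ faceNbhd 1 δ x r F := by
  intro z hz
  rw [mem_boxP] at hz
  refine Metric.mem_cthickening_of_dist_le z
    (Function.update z (oidx i) (x (oidx i) + (if F.2 (oidx i) then r else -r))) δ _ ?_ ?_
  · rw [mem_kFace_iff hi]
    constructor
    · rw [Function.update_of_ne (oidx_ne i).symm]
      have := hz i
      rwa [Function.update_of_ne (oidx_ne i).symm, Function.update_self] at this
    · rw [Function.update_self]
  · rw [dist_pi_le_iff hδ]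
    intro l
    by_cases hl : l = oidx i
    · subst hl
      rw [Function.update_self, Real.dist_eq]
      have := hz (oidx i)
      rwa [Function.update_self, Function.update_of_ne (oidx_ne i)] at this
    · rw [Function.update_of_ne hl]
      simpa using hδ

lemma faceNbhd_subset_boxP {x : Fin 2 → ℝ} {r a : ℝ} (ha : 0 < a) {F : FaceIdx 2 1}
    {i : Fin 2} (hi : F.1.1 = {i}) :
    faceNbhd 1 a x r F ⊆
      boxP (Function.update x (oidx i) (x (oidx i) + (if F.2 (oidx i) then r else -r)))
        (Function.update (fun _ => 2 * a) i (r + 2 * a)) := by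
  intro z hz
  have h2 : z ∈ Metric.thickening (2 * a) (kFace 1 x r F) :=
    Metric.cthickening_subset_thickening' (by linarith) (by linarith) _ hz
  rw [Metric.mem_thickening_iff] at h2
  obtain ⟨y, hy, hd⟩ := h2
  rw [mem_kFace_iff hi] at hy
  rw [mem_boxP]
  intro l
  have hl2 := dist_le_pi_dist z y l
  rw [Real.dist_eq] at hl2
  by_cases hli : l = i
  · subst hli
    rw [Function.update_of_ne (oidx_ne l).symm, Function.update_self]
    have := abs_sub_le (z l) (y l) (x l)
    have h3 := hy.1
    linarith
  · have hl' : l = oidx i := eq_oidx_of_ne hli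
    subst hl'
    rw [Function.update_self, Function.update_of_ne (oidx_ne i)]
    have h3 : |y (oidx i) - (x (oidx i) + if F.2 (oidx i) = true then r else -r)| = 0 := by
      rw [hy.2]; simp
    have := abs_sub_le (z (oidx i)) (y (oidx i))
      (x (oidx i) + if F.2 (oidx i) = true then r else -r)
    linarith

lemma kFace_subset_cthickening {x y : Fin 2 → ℝ} {d r : ℝ} (hd : 0 ≤ d)
    (h : ∀ l, |y l - x l| ≤ d) (F : FaceIdx 2 1) :
    kFace 1 x r F ⊆ Metric.cthickening d (kFace 1 y r F) := by
  intro z hz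
  refine Metric.mem_cthickening_of_dist_le z (fun l => z l + (y l - x l)) d _ ?_ ?_
  · refine ⟨fun l hl => ?_, fun l hl => ?_⟩
    · rw [show z l + (y l - x l) - y l = z l - x l by ring]
      exact hz.1 l hl
    · show z l + (y l - x l) = y l + if F.2 l = true then r else -r
      rw [hz.2 l hl]; ring
  · rw [dist_pi_le_iff hd]
    intro l
    rw [Real.dist_eq, show z l - (z l + (y l - x l)) = -(y l - x l) by ring, abs_neg]
    exact h l

lemma faceNbhd_subset_faceNbhd {x y : Fin 2 → ℝ} {δ r : ℝ} (hδ : 0 < δ)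
    (h : ∀ l, |y l - x l| ≤ δ / 2) (F : FaceIdx 2 1) :
    faceNbhd 1 δ x r F ⊆ faceNbhd 1 (4 * δ) y r F := by
  have h1 : kFace 1 x r F ⊆ Metric.cthickening (δ / 2) (kFace 1 y r F) :=
    kFace_subset_cthickening (by linarith) h F
  calc Metric.cthickening δ (kFace 1 x r F)
      ⊆ Metric.cthickening δ (Metric.cthickening (δ / 2) (kFace 1 y r F)) :=
        Metric.cthickening_subset_of_subset _ h1
    _ ⊆ Metric.cthickening (δ + δ / 2) (kFace 1 y r F) :=
        Metric.cthickening_cthickening_subset (le_of_lt hδ) (by linarith) _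
    _ ⊆ Metric.cthickening (4 * δ) (kFace 1 y r F) :=
        Metric.cthickening_mono (by linarith) _

end SkelNec

/-- if `M_{4δ}` is bounded on `L^p(w)` in `ℝ²`, then `w` satisfies the
skeleton `𝒜^S_p` condition at scale `δ`. -/
theorem necessary_condition (δ p : ℝ) (hδ : δ ∈ Set.Ioo (0 : ℝ) 1) (hp : 1 < p)
    (w : (Fin 2 → ℝ) → ℝ) (hw0 : ∀ x, 0 ≤ w x) (hw : LocallyIntegrable w volume)
    (C : ℝ)
    (hbdd : ∀ f : (Fin 2 → ℝ) → ℝ,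
      lpNormE (skelMax 2 1 (4 * δ) f) p (wMeasure w) ≤
        ENNReal.ofReal C * eLpNorm f (ENNReal.ofReal p) (wMeasure w)) :
    ∃ B : ℝ, ∀ (x : Fin 2 → ℝ) (r : ℝ), r ∈ Set.Icc (1 : ℝ) 2 →
      ((volume (skelNbhd 1 δ x r)).toReal⁻¹ * ∫ y in cube x δ, w y) *
          (⨅ F : FaceIdx 2 1,
            ravg (faceNbhd 1 δ x r F) fun y => w y ^ (-(p / (p - 1)) / p)) ^ p *
          (ravg (skelNbhd 1 δ x r) fun y => w y ^ (-(p / (p - 1)) / p))⁻¹ ≤ B := by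
  obtain ⟨hδ0, hδ1⟩ := hδ
  have hp0 : (0 : ℝ) < p := by linarith
  have hp1 : (0 : ℝ) < p - 1 := by linarith
  set σ : (Fin 2 → ℝ) → ℝ := fun y => w y ^ (-(p / (p - 1)) / p) with hσdef
  have hσ0 : ∀ y, 0 ≤ σ y := fun y => Real.rpow_nonneg (hw0 y) _
  have hwAE : AEMeasurable w (volume : Measure (Fin 2 → ℝ)) :=
    hw.aestronglyMeasurable.aemeasurable
  have hσAE : AEMeasurable σ (volume : Measure (Fin 2 → ℝ)) := hwAE.pow_const _
  have hee : -(p / (p - 1)) / p ≠ 0 := by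
    have h1 : 0 < p / (p - 1) := div_pos hp0 hp1
    intro h
    rw [div_eq_zero_iff] at h
    rcases h with h | h <;> linarith
  have hkey : ∀ y, σ y ^ p * w y = σ y := by
    intro y
    rcases eq_or_lt_of_le (hw0 y) with h0 | h0
    · show (w y ^ (-(p / (p - 1)) / p)) ^ p * w y = w y ^ (-(p / (p - 1)) / p)
      rw [← h0, Real.zero_rpow hee, Real.zero_rpow (ne_of_gt hp0), zero_mul]
    · show (w y ^ (-(p / (p - 1)) / p)) ^ p * w y = w y ^ (-(p / (p - 1)) / p)
      rw [← Real.rpow_mul (le_of_lt h0)]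
      nth_rewrite 2 [← Real.rpow_one (w y)]
      rw [← Real.rpow_add h0]
      congr 1
      field_simp
      ring
  refine ⟨(80 * max C 0) ^ p, ?_⟩
  intro x r hr
  obtain ⟨hr1, hr2⟩ := hr
  haveI hne : Nonempty (FaceIdx 2 1) := ⟨(⟨{0}, Finset.card_singleton 0⟩, fun _ => true)⟩
  set S := skelNbhd 1 δ x r with hSdef
  set Q := cube x δ with hQdef
  set m := ⨅ F : FaceIdx 2 1, ravg (faceNbhd 1 δ x r F) σ with hmdef
  -- volume bounds for faces
  have hvolF_lb : ∀ F : FaceIdx 2 1,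
      ENNReal.ofReal (4 * δ) ≤ volume (faceNbhd 1 δ x r F) := by
    intro F
    obtain ⟨i, hi⟩ := Finset.card_eq_one.mp F.1.2
    have h1 := SkelNec.boxP_subset_faceNbhd (x := x) (r := r) (le_of_lt hδ0) hi
    have h2 := measure_mono (μ := volume) h1
    rw [SkelNec.volume_boxP_update] at h2
    refine le_trans ?_ h2
    calc ENNReal.ofReal (4 * δ) = ENNReal.ofReal 2 * ENNReal.ofReal (2 * δ) := by
          rw [← ENNReal.ofReal_mul (by norm_num)]
          congr 1
          ring
      _ ≤ ENNReal.ofReal (2 * r) * ENNReal.ofReal (2 * δ) := by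
          gcongr
          linarith
  have hvolF_ub4 : ∀ (y : Fin 2 → ℝ) (F : FaceIdx 2 1),
      volume (faceNbhd 1 (4 * δ) y r F) ≤ ENNReal.ofReal (320 * δ) := by
    intro y F
    obtain ⟨i, hi⟩ := Finset.card_eq_one.mp F.1.2
    have h1 := SkelNec.faceNbhd_subset_boxP (x := y) (r := r) (a := 4 * δ) (by linarith) hi
    have h2 := measure_mono (μ := volume) h1
    rw [SkelNec.volume_boxP_update] at h2
    refine le_trans h2 ?_
    calc ENNReal.ofReal (2 * (r + 2 * (4 * δ))) * ENNReal.ofReal (2 * (2 * (4 * δ)))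
        ≤ ENNReal.ofReal 20 * ENNReal.ofReal (2 * (2 * (4 * δ))) :=
          mul_le_mul' (ENNReal.ofReal_le_ofReal (by linarith)) le_rfl
      _ = ENNReal.ofReal (20 * (2 * (2 * (4 * δ)))) := (ENNReal.ofReal_mul (by norm_num)).symm
      _ ≤ ENNReal.ofReal (320 * δ) := ENNReal.ofReal_le_ofReal (by linarith)
  -- volume bounds for the skeleton neighborhood
  have hSbox : S ⊆ SkelNec.boxP x (fun _ => 6) := by
    rw [hSdef]
    unfold skelNbhd
    refine Set.iUnion_subset fun F => ?_
    obtain ⟨i, hi⟩ := Finset.card_eq_one.mp F.1.2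
    refine (SkelNec.faceNbhd_subset_boxP hδ0 hi).trans ?_
    intro z hz
    rw [SkelNec.mem_boxP] at hz ⊢
    intro l
    have h1 := hz l
    have h2 : |Function.update x (SkelNec.oidx i)
        (x (SkelNec.oidx i) + (if F.2 (SkelNec.oidx i) then r else -r)) l - x l| ≤ r := by
      by_cases hl : l = SkelNec.oidx i
      · subst hl
        rw [Function.update_self,
          show x (SkelNec.oidx i) + (if F.2 (SkelNec.oidx i) then r else -r) - x (SkelNec.oidx i)
            = (if F.2 (SkelNec.oidx i) then r else -r) by ring]
        split <;> simp [abs_neg, abs_of_nonneg (show (0:ℝ) ≤ r by linarith)]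
      · rw [Function.update_of_ne hl]
        simp
        linarith
    have h3 : (Function.update (fun _ => 2 * δ) i (r + 2 * δ)) l ≤ r + 2 * δ := by
      by_cases hl : l = i
      · subst hl; rw [Function.update_self]
      · rw [Function.update_of_ne hl]; linarith
    have h4 := abs_sub_le (z l)
      (Function.update x (SkelNec.oidx i)
        (x (SkelNec.oidx i) + (if F.2 (SkelNec.oidx i) then r else -r)) l) (x l)
    linarith
  have hS_ub : volume S ≤ ENNReal.ofReal 12 * ENNReal.ofReal 12 := by
    have := measure_mono (μ := volume) hSbox
    rw [SkelNec.volume_boxP] at this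
    refine this.trans (le_of_eq ?_)
    norm_num
  have hS_lb : ENNReal.ofReal (4 * δ) ≤ volume S := by
    refine le_trans (hvolF_lb (Classical.arbitrary _)) (measure_mono ?_)
    rw [hSdef]
    exact Set.subset_iUnion (fun F => faceNbhd 1 δ x r F) _
  have hSfin : volume S ≠ ⊤ :=
    ne_top_of_le_ne_top (ENNReal.mul_ne_top ENNReal.ofReal_ne_top ENNReal.ofReal_ne_top) hS_ub
  have hSne : volume S ≠ 0 := by
    intro h
    rw [h, nonpos_iff_eq_zero, ENNReal.ofReal_eq_zero] at hS_lb
    nlinarith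
  have hvS : 0 < (volume S).toReal := ENNReal.toReal_pos hSne hSfin
  have hm0 : 0 ≤ m := by
    refine Real.iInf_nonneg fun F => ?_
    unfold ravg
    exact mul_nonneg (inv_nonneg.mpr ENNReal.toReal_nonneg) (integral_nonneg fun y => hσ0 y)
  by_cases hT0 : (∫ y in S, σ y) = 0
  · have h1 : ravg S σ = 0 := by
      unfold ravg
      rw [hT0, mul_zero]
    rw [h1, inv_zero, mul_zero]
    exact Real.rpow_nonneg (by positivity) p
  · have hint : IntegrableOn σ S volume := by
      by_contra hni
      exact hT0 (integral_undef hni)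
    set I := ∫⁻ y in S, ENNReal.ofReal (σ y) with hIdef
    have hIofReal : ENNReal.ofReal (∫ y in S, σ y) = I :=
      ofReal_integral_eq_lintegral_ofReal hint (Filter.Eventually.of_forall fun y => hσ0 y)
    have hIfin : I ≠ ⊤ := by rw [← hIofReal]; exact ENNReal.ofReal_ne_top
    have hTpos : 0 < ∫ y in S, σ y :=
      lt_of_le_of_ne (integral_nonneg fun y => hσ0 y) (Ne.symm hT0)
    have hQcomp : IsCompact Q := by
      rw [hQdef, SkelNec.cube_eq_boxP]
      exact SkelNec.isCompact_boxP _ _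
    have hQmeas : MeasurableSet Q := hQcomp.isClosed.measurableSet
    have hwQ : IntegrableOn w Q volume := hw.integrableOn_isCompact hQcomp
    set WQ := ∫⁻ y in Q, ENNReal.ofReal (w y) with hWQdef
    have hWQofReal : ENNReal.ofReal (∫ y in Q, w y) = WQ :=
      ofReal_integral_eq_lintegral_ofReal hwQ (Filter.Eventually.of_forall hw0)
    have hWQfin : WQ ≠ ⊤ := by rw [← hWQofReal]; exact ENNReal.ofReal_ne_top
    set f := S.indicator σ with hfdef
    have hfAE : AEMeasurable f volume := hσAE.indicator SkelNec.measurableSet_skelNbhd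
    have hnorm : ∀ z, (‖f z‖₊ : ℝ≥0∞) = S.indicator (fun u => ENNReal.ofReal (σ u)) z := by
      intro z
      by_cases hz : z ∈ S
      · rw [hfdef, Set.indicator_of_mem hz, Set.indicator_of_mem hz,
          ← enorm_eq_nnnorm, Real.enorm_eq_ofReal (hσ0 z)]
      · rw [hfdef, Set.indicator_of_notMem hz, Set.indicator_of_notMem hz]
        simp
    have hRHS : eLpNorm f (ENNReal.ofReal p) (wMeasure w) = I ^ (1 / p) := by
      rw [eLpNorm_eq_lintegral_rpow_enorm_toReal (p := ENNReal.ofReal p)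
        (by simp only [ne_eq, ENNReal.ofReal_eq_zero, not_le]; linarith) ENNReal.ofReal_ne_top]
      rw [ENNReal.toReal_ofReal (le_of_lt hp0)]
      congr 1
      rw [wMeasure, lintegral_withDensity_eq_lintegral_mul₀ hwAE.ennreal_ofReal
        (hfAE.enorm.pow_const p)]
      rw [hIdef, ← lintegral_indicator SkelNec.measurableSet_skelNbhd]
      refine lintegral_congr fun z => ?_
      simp only [Pi.mul_apply]
      by_cases hz : z ∈ S
      · rw [Set.indicator_of_mem hz, enorm_eq_nnnorm, hnorm z, Set.indicator_of_mem hz,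
          ENNReal.ofReal_rpow_of_nonneg (hσ0 z) (le_of_lt hp0),
          ← ENNReal.ofReal_mul (hw0 z), mul_comm (w z) _, hkey z]
      · rw [Set.indicator_of_notMem hz, enorm_eq_nnnorm, hnorm z, Set.indicator_of_notMem hz,
          ENNReal.zero_rpow_of_pos hp0, mul_zero]
    have hptwise : ∀ y ∈ Q, ENNReal.ofReal (m / 80) ≤ skelMax 2 1 (4 * δ) f y := by
      intro y hy
      have hyQ : ∀ l, |y l - x l| ≤ δ / 2 := hy
      unfold skelMax
      refine le_trans ?_ (le_biSup _ (Set.mem_Icc.mpr ⟨hr1, hr2⟩))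
      refine le_iInf fun F => ?_
      have hvol := hvolF_ub4 y F
      have hface_sub : faceNbhd 1 δ x r F ⊆ S ∩ faceNbhd 1 (4 * δ) y r F := by
        refine Set.subset_inter ?_ (SkelNec.faceNbhd_subset_faceNbhd hδ0 hyQ F)
        rw [hSdef]
        exact Set.subset_iUnion (fun F' => faceNbhd 1 δ x r F') F
      have hIface : ∫⁻ z in faceNbhd 1 δ x r F, ENNReal.ofReal (σ z)
          ≤ ∫⁻ z in faceNbhd 1 (4 * δ) y r F, (‖f z‖₊ : ℝ≥0∞) := by
        calc ∫⁻ z in faceNbhd 1 δ x r F, ENNReal.ofReal (σ z)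
            ≤ ∫⁻ z in S ∩ faceNbhd 1 (4 * δ) y r F, ENNReal.ofReal (σ z) :=
              lintegral_mono_set hface_sub
          _ = ∫⁻ z in faceNbhd 1 (4 * δ) y r F,
                S.indicator (fun u => ENNReal.ofReal (σ u)) z := by
              rw [lintegral_indicator SkelNec.measurableSet_skelNbhd,
                Measure.restrict_restrict SkelNec.measurableSet_skelNbhd]
          _ = ∫⁻ z in faceNbhd 1 (4 * δ) y r F, (‖f z‖₊ : ℝ≥0∞) :=
              lintegral_congr fun z => (hnorm z).symm
      have hvolF_fin : volume (faceNbhd 1 δ x r F) ≠ ⊤ := by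
        refine ne_top_of_le_ne_top hSfin (measure_mono ?_)
        rw [hSdef]
        exact Set.subset_iUnion (fun F' => faceNbhd 1 δ x r F') F
      have hvF : 0 < (volume (faceNbhd 1 δ x r F)).toReal := by
        refine ENNReal.toReal_pos ?_ hvolF_fin
        intro h
        have := hvolF_lb F
        rw [h, nonpos_iff_eq_zero, ENNReal.ofReal_eq_zero] at this
        nlinarith
      have hintF : IntegrableOn σ (faceNbhd 1 δ x r F) volume := by
        refine hint.mono_set ?_
        rw [hSdef]
        exact Set.subset_iUnion (fun F' => faceNbhd 1 δ x r F') F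
      have hJ : ∫⁻ z in faceNbhd 1 δ x r F, ENNReal.ofReal (σ z)
          = ENNReal.ofReal ((volume (faceNbhd 1 δ x r F)).toReal *
              ravg (faceNbhd 1 δ x r F) σ) := by
        rw [← ofReal_integral_eq_lintegral_ofReal hintF
          (Filter.Eventually.of_forall fun z => hσ0 z)]
        congr 1
        unfold ravg
        rw [← mul_assoc, mul_inv_cancel₀ (ne_of_gt hvF), one_mul]
      have hm_le : m ≤ ravg (faceNbhd 1 δ x r F) σ := ciInf_le (Finite.bddBelow_range _) F
      have hv4 : 4 * δ ≤ (volume (faceNbhd 1 δ x r F)).toReal := by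
        have := ENNReal.toReal_mono hvolF_fin (hvolF_lb F)
        rwa [ENNReal.toReal_ofReal (by linarith)] at this
      calc ENNReal.ofReal (m / 80)
          = (ENNReal.ofReal (320 * δ))⁻¹ * (ENNReal.ofReal (4 * δ) * ENNReal.ofReal m) := by
            have h48 : (4 * δ) / (320 * δ) = 1 / 80 := by
              field_simp
              ring
            rw [show (ENNReal.ofReal (320 * δ))⁻¹ * (ENNReal.ofReal (4 * δ) * ENNReal.ofReal m)
                = ENNReal.ofReal ((4 * δ) / (320 * δ)) * ENNReal.ofReal m by
              rw [ENNReal.ofReal_div_of_pos (by linarith : (0:ℝ) < 320 * δ), div_eq_mul_inv]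
              ring]
            rw [← ENNReal.ofReal_mul (by positivity), h48]
            congr 1
            ring
        _ ≤ (volume (faceNbhd 1 (4 * δ) y r F))⁻¹ *
              ∫⁻ z in faceNbhd 1 (4 * δ) y r F, (‖f z‖₊ : ℝ≥0∞) := by
            refine mul_le_mul' (ENNReal.inv_le_inv' hvol) (le_trans ?_ hIface)
            rw [hJ, ← ENNReal.ofReal_mul (by linarith)]
            exact ENNReal.ofReal_le_ofReal
              (mul_le_mul hv4 hm_le hm0 ENNReal.toReal_nonneg)
    have hLHS : ENNReal.ofReal (m / 80) * WQ ^ (1 / p) ≤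
        lpNormE (skelMax 2 1 (4 * δ) f) p (wMeasure w) := by
      unfold lpNormE
      have h1 : ENNReal.ofReal (m / 80) ^ p * WQ ≤
          ∫⁻ z, skelMax 2 1 (4 * δ) f z ^ p ∂(wMeasure w) := by
        have h2 : ∫⁻ z, Q.indicator (fun _ => ENNReal.ofReal (m / 80) ^ p) z ∂(wMeasure w)
            ≤ ∫⁻ z, skelMax 2 1 (4 * δ) f z ^ p ∂(wMeasure w) := by
          refine lintegral_mono fun z => ?_
          by_cases hz : z ∈ Q
          · rw [Set.indicator_of_mem hz]
            exact ENNReal.rpow_le_rpow (hptwise z hz) (le_of_lt hp0)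
          · rw [Set.indicator_of_notMem hz]
            exact zero_le
        refine le_trans (le_of_eq ?_) h2
        rw [lintegral_indicator hQmeas, setLIntegral_const, wMeasure,
          withDensity_apply _ hQmeas]
      calc ENNReal.ofReal (m / 80) * WQ ^ (1 / p)
          = (ENNReal.ofReal (m / 80) ^ p * WQ) ^ (1 / p) := by
            rw [ENNReal.mul_rpow_of_nonneg _ _ (by positivity : (0:ℝ) ≤ 1 / p),
              ← ENNReal.rpow_mul, mul_one_div_cancel (ne_of_gt hp0), ENNReal.rpow_one]
        _ ≤ _ := ENNReal.rpow_le_rpow h1 (by positivity)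
    have hCp : (0:ℝ) ≤ max C 0 := le_max_right C 0
    have hchain : ENNReal.ofReal (m / 80) * WQ ^ (1 / p) ≤
        ENNReal.ofReal (max C 0) * I ^ (1 / p) := by
      refine le_trans (hLHS.trans (hbdd f)) ?_
      rw [hRHS]
      exact mul_le_mul' (ENNReal.ofReal_le_ofReal (le_max_left C 0)) le_rfl
    have hp_chain : ENNReal.ofReal ((m / 80) ^ p) * WQ ≤
        ENNReal.ofReal ((max C 0) ^ p) * I := by
      have h := ENNReal.rpow_le_rpow hchain (le_of_lt hp0)
      rw [ENNReal.mul_rpow_of_nonneg _ _ (le_of_lt hp0),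
        ENNReal.mul_rpow_of_nonneg _ _ (le_of_lt hp0),
        ← ENNReal.rpow_mul, ← ENNReal.rpow_mul,
        one_div_mul_cancel (ne_of_gt hp0), ENNReal.rpow_one, ENNReal.rpow_one,
        ENNReal.ofReal_rpow_of_nonneg (by positivity) (le_of_lt hp0),
        ENNReal.ofReal_rpow_of_nonneg hCp (le_of_lt hp0)] at h
      exact h
    have hRfin : ENNReal.ofReal ((max C 0) ^ p) * I ≠ ⊤ :=
      ENNReal.mul_ne_top ENNReal.ofReal_ne_top hIfin
    have hreal : (m / 80) ^ p * WQ.toReal ≤ (max C 0) ^ p * (∫ y in S, σ y) := by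
      have h := ENNReal.toReal_mono hRfin hp_chain
      rw [ENNReal.toReal_mul, ENNReal.toReal_mul,
        ENNReal.toReal_ofReal (Real.rpow_nonneg (by positivity) p),
        ENNReal.toReal_ofReal (Real.rpow_nonneg hCp p)] at h
      rwa [show I.toReal = ∫ y in S, σ y from by
        rw [← hIofReal, ENNReal.toReal_ofReal (integral_nonneg fun y => hσ0 y)]] at h
    have hW : (∫ y in Q, w y) = WQ.toReal := by
      rw [← hWQofReal, ENNReal.toReal_ofReal (integral_nonneg fun y => hw0 y)]
    show ((volume S).toReal⁻¹ * ∫ y in Q, w y) * m ^ p * (ravg S σ)⁻¹ ≤ (80 * max C 0) ^ p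
    unfold ravg
    rw [hW]
    set vS := (volume S).toReal with hvSdef
    set T := ∫ y in S, σ y with hTdef
    have h80p : (0:ℝ) < (80:ℝ) ^ p := Real.rpow_pos_of_pos (by norm_num) p
    have hexp : (m / 80) ^ p = m ^ p / 80 ^ p := Real.div_rpow hm0 (by norm_num) p
    have h80 : ((80:ℝ) * max C 0) ^ p = 80 ^ p * (max C 0) ^ p :=
      Real.mul_rpow (by norm_num) hCp
    have hWm : WQ.toReal * m ^ p ≤ 80 ^ p * ((max C 0) ^ p * T) := by
      rw [hexp, div_mul_eq_mul_div, div_le_iff₀ h80p] at hreal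
      nlinarith [hreal]
    calc (vS⁻¹ * WQ.toReal) * m ^ p * (vS⁻¹ * T)⁻¹
        = WQ.toReal * m ^ p * T⁻¹ * (vS⁻¹ * vS) := by
          rw [mul_inv, inv_inv]
          ring
      _ = WQ.toReal * m ^ p * T⁻¹ := by
          rw [inv_mul_cancel₀ (ne_of_gt hvS), mul_one]
      _ ≤ (80 ^ p * ((max C 0) ^ p * T)) * T⁻¹ :=
          mul_le_mul_of_nonneg_right hWm (inv_nonneg.mpr (le_of_lt hTpos))
      _ = 80 ^ p * (max C 0) ^ p * (T * T⁻¹) := by ring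
      _ = (80 * max C 0) ^ p := by
          rw [mul_inv_cancel₀ (ne_of_gt hTpos), mul_one, ← h80]

end
end

section
/- Let w be a weight on ℝ² with [w]_{A^S_1} < ∞. Then lim_{p→1⁺} [w]_{A^S_p} = [w]_{A^S_1}. -/
open MeasureTheory Metric Set
open scoped ENNReal NNReal

noncomputable section

section Aux

open Filter

lemma coreMono {α : Type*} [MeasurableSpace α] {μ : Measure α} (hμ : μ Set.univ = 1)
    {g : α → ℝ≥0∞} (hg : AEMeasurable g μ) {q1 q2 : ℝ} (h0 : 0 < q1) (h12 : q1 ≤ q2) :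
    (∫⁻ x, g x ^ q1 ∂μ) ^ (1/q1) ≤ (∫⁻ x, g x ^ q2 ∂μ) ^ (1/q2) := by
  rcases eq_or_lt_of_le h12 with rfl | hlt
  · exact le_rfl
  · set r := q2 / q1 with hr_def
    have hr : 1 < r := (one_lt_div h0).2 hlt
    have hconj : r.HolderConjugate (Real.conjExponent r) :=
      Real.HolderConjugate.conjExponent hr
    have hmeas : AEMeasurable (fun x => g x ^ q1) μ := hg.pow_const q1
    have holder := ENNReal.lintegral_mul_le_Lp_mul_Lq μ hconj hmeas
      (aemeasurable_const (b := (1 : ℝ≥0∞)))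
    simp only [Pi.mul_apply, mul_one, ENNReal.one_rpow, lintegral_const, hμ,
      ENNReal.one_rpow, one_mul] at holder
    have hpow : ∀ x, (g x ^ q1) ^ r = g x ^ q2 := by
      intro x
      rw [← ENNReal.rpow_mul]
      congr 1
      field_simp [hr_def]
      rw [hr_def]
      field_simp [h0.ne']
    simp_rw [hpow] at holder
    calc (∫⁻ x, g x ^ q1 ∂μ) ^ (1/q1)
        ≤ ((∫⁻ x, g x ^ q2 ∂μ) ^ (1/r)) ^ (1/q1) :=
          ENNReal.rpow_le_rpow holder (by positivity)
      _ = (∫⁻ x, g x ^ q2 ∂μ) ^ (1/q2) := by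
          rw [← ENNReal.rpow_mul]
          congr 1
          rw [hr_def]
          field_simp

lemma coreLeEssSup {α : Type*} [MeasurableSpace α] {μ : Measure α} (hμ : μ Set.univ = 1)
    (g : α → ℝ≥0∞) {q : ℝ} (hq : 0 < q) :
    (∫⁻ x, g x ^ q ∂μ) ^ (1/q) ≤ essSup g μ := by
  have h1 : ∫⁻ x, g x ^ q ∂μ ≤ essSup g μ ^ q := by
    calc ∫⁻ x, g x ^ q ∂μ ≤ ∫⁻ _, essSup g μ ^ q ∂μ :=
          lintegral_mono_ae ((ENNReal.ae_le_essSup g).mono fun x hx => ENNReal.rpow_le_rpow hx hq.le)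
      _ = essSup g μ ^ q := by rw [lintegral_const, hμ, mul_one]
  calc (∫⁻ x, g x ^ q ∂μ) ^ (1/q) ≤ (essSup g μ ^ q) ^ (1/q) :=
        ENNReal.rpow_le_rpow h1 (by positivity)
    _ = essSup g μ := by
        rw [← ENNReal.rpow_mul, mul_one_div, div_self hq.ne', ENNReal.rpow_one]

lemma coreEssSupLe {α : Type*} [MeasurableSpace α] {μ : Measure α} (hμ : μ Set.univ = 1)
    {g : α → ℝ≥0∞} (hg : AEMeasurable g μ) :
    essSup g μ ≤ ⨆ p ∈ Set.Ioi (1:ℝ), (∫⁻ x, g x ^ (1/(p-1)) ∂μ) ^ (p-1) := by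
  set L := ⨆ p ∈ Set.Ioi (1:ℝ), (∫⁻ x, g x ^ (1/(p-1)) ∂μ) ^ (p-1) with hL
  by_contra hcon
  push_neg at hcon
  obtain ⟨c, hLc, hc⟩ := exists_between hcon
  -- ε = μ {x | c < g x} > 0
  set s := {x | c < g x} with hs
  have hεpos : 0 < μ s := by
    rcases eq_or_lt_of_le (zero_le : 0 ≤ μ s) with h0 | h0
    · exfalso
      have : ∀ᵐ x ∂μ, g x ≤ c := by
        rw [ae_iff]
        simpa [hs, not_le] using h0.symm
      exact absurd (essSup_le_of_ae_le c this) (not_le.2 hc)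
    · exact h0
  have hεle : μ s ≤ 1 := by
    rw [← hμ]; exact measure_mono (subset_univ s)
  have hεtop : μ s ≠ ⊤ := (hεle.trans_lt ENNReal.one_lt_top).ne
  -- for each p > 1, c * (μ s)^(p-1) ≤ L
  have hbound : ∀ p ∈ Set.Ioi (1:ℝ), c * μ s ^ (p-1) ≤ L := by
    intro p hp
    have hp1 : (0:ℝ) < p - 1 := sub_pos.2 hp
    set q := 1/(p-1) with hq_def
    have hq : 0 < q := by positivity
    have key : c ^ q * μ s ≤ ∫⁻ x, g x ^ q ∂μ := by
      have h1 := mul_meas_ge_le_lintegral₀ (hg.pow_const q) (c ^ q)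
      refine le_trans ?_ h1
      gcongr
      intro x hx
      exact ENNReal.rpow_le_rpow (le_of_lt hx) hq.le
    have key2 : (c ^ q * μ s) ^ (p-1) ≤ (∫⁻ x, g x ^ q ∂μ) ^ (p-1) :=
      ENNReal.rpow_le_rpow key hp1.le
    have heq : (c ^ q * μ s) ^ (p-1) = c * μ s ^ (p-1) := by
      rw [ENNReal.mul_rpow_of_nonneg _ _ hp1.le, ← ENNReal.rpow_mul]
      congr 1
      rw [hq_def]
      field_simp
      rw [ENNReal.rpow_one]
    rw [heq] at key2
    exact key2.trans (le_iSup₂ (f := fun p (_ : p ∈ Set.Ioi (1:ℝ)) =>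
      (∫⁻ x, g x ^ (1/(p-1)) ∂μ) ^ (p-1)) p hp)
  -- limit as p → 1⁺ of c * (μ s)^(p-1) is c
  have htend : Tendsto (fun p : ℝ => c * μ s ^ (p-1)) (nhdsWithin 1 (Set.Ioi 1)) (nhds c) := by
    have h2 : Tendsto (fun p : ℝ => μ s ^ (p-1)) (nhdsWithin 1 (Set.Ioi 1)) (nhds 1) := by
      have hreal : Tendsto (fun p : ℝ => (μ s).toReal ^ (p-1))
          (nhdsWithin 1 (Set.Ioi 1)) (nhds 1) := by
        have hct : ContinuousAt (fun t : ℝ => (μ s).toReal ^ t) 0 :=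
          Real.continuousAt_const_rpow (by
            simp only [ne_eq, ENNReal.toReal_eq_zero_iff]
            push_neg
            exact ⟨hεpos.ne', hεtop⟩)
        have hsub : Tendsto (fun p : ℝ => p - 1) (nhdsWithin 1 (Set.Ioi 1)) (nhds 0) := by
          have h3 : Tendsto (fun p : ℝ => p - 1) (nhds 1) (nhds (1 - 1)) :=
            (continuous_sub_right (1:ℝ)).tendsto 1
          rw [sub_self] at h3
          exact h3.mono_left nhdsWithin_le_nhds
        have := hct.tendsto.comp hsub
        simpa [Real.rpow_zero, Function.comp_def] using this
      have := (ENNReal.continuous_ofReal.tendsto 1).comp hreal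
      simp only [ENNReal.ofReal_one] at this
      refine this.congr fun p => ?_
      simp only [Function.comp_apply]
      rw [← ENNReal.ofReal_rpow_of_pos (ENNReal.toReal_pos hεpos.ne' hεtop),
        ENNReal.ofReal_toReal hεtop]
    have h4 := ENNReal.Tendsto.const_mul (a := c) h2 (Or.inl one_ne_zero)
    simpa using h4
  have : c ≤ L := le_of_tendsto htend (eventually_nhdsWithin_of_forall hbound)
  exact absurd hLc (not_lt.2 this)


lemma kFace_nonempty {n k : ℕ} (x : Fin n → ℝ) {r : ℝ} (hr : 0 ≤ r) (F : FaceIdx n k) :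
    (kFace k x r F).Nonempty := by
  classical
  refine ⟨fun i => if i ∈ F.1.1 then x i else x i + (if F.2 i then r else -r), ?_, ?_⟩
  · intro i hi
    simp only [if_pos hi, sub_self, abs_zero]
    exact hr
  · intro i hi
    simp only [if_neg hi]

lemma kFace_subset_closedBall {n k : ℕ} (x : Fin n → ℝ) {r : ℝ} (hr : 0 ≤ r) (F : FaceIdx n k) :
    kFace k x r F ⊆ Metric.closedBall x r := by
  intro y hy
  rw [Metric.mem_closedBall, dist_pi_le_iff hr]
  intro i
  rw [Real.dist_eq]
  by_cases hi : i ∈ F.1.1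
  · exact hy.1 i hi
  · rw [hy.2 i hi, add_sub_cancel_left]
    split_ifs
    · rw [abs_of_nonneg hr]
    · rw [abs_neg, abs_of_nonneg hr]

lemma vol_selFace_pos {n k N : ℕ} (hN : 0 < N) (z : Fin n → ℤ) (ρ : (Fin n → Fin N) → ℝ)
    (sel' : (Fin n → Fin N) → FaceIdx n k) (m : Fin n → Fin N) (hρ : 1 ≤ ρ m) :
    0 < volume (selFace k N z ρ sel' ((N : ℝ)⁻¹) m) := by
  have hδ : (0:ℝ) < (N : ℝ)⁻¹ := by
    have : (0:ℝ) < (N : ℝ) := by exact_mod_cast hN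
    positivity
  obtain ⟨y, hy⟩ := kFace_nonempty (gridCenter N z m) (r := ρ m) (by linarith) (sel' m)
  have hsub : Metric.thickening ((N : ℝ)⁻¹) (kFace k (gridCenter N z m) (ρ m) (sel' m)) ⊆
      selFace k N z ρ sel' ((N : ℝ)⁻¹) m :=
    Metric.thickening_subset_cthickening _ _
  refine lt_of_lt_of_le ?_ (measure_mono hsub)
  exact Metric.isOpen_thickening.measure_pos volume
    ⟨y, Metric.self_subset_thickening hδ _ hy⟩

lemma vol_selFace_lt_top {n k N : ℕ} (z : Fin n → ℤ) (ρ : (Fin n → Fin N) → ℝ)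
    (sel' : (Fin n → Fin N) → FaceIdx n k) (m : Fin n → Fin N) (hρ0 : 0 ≤ ρ m) :
    volume (selFace k N z ρ sel' ((N : ℝ)⁻¹) m) < ⊤ := by
  have hδ : (0:ℝ) ≤ (N : ℝ)⁻¹ := by positivity
  have hsub : selFace k N z ρ sel' ((N : ℝ)⁻¹) m ⊆
      Metric.closedBall (gridCenter N z m) ((N : ℝ)⁻¹ + ρ m) := by
    rw [← cthickening_closedBall hδ hρ0 (gridCenter N z m)]
    exact Metric.cthickening_subset_of_subset _
      (kFace_subset_closedBall (gridCenter N z m) hρ0 (sel' m))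
  exact lt_of_le_of_lt (measure_mono hsub) measure_closedBall_lt_top

lemma integral_eq {α : Type*} [MeasurableSpace α] (ν : Measure α) (ℓ : Set α)
    (w : α → ℝ) {p : ℝ} (hp : 1 < p) :
    (ν ℓ)⁻¹ * ∫⁻ y in ℓ, ENNReal.ofReal (w y) ^ (1 - p / (p - 1)) ∂ν
      = ∫⁻ y, ((ENNReal.ofReal (w y))⁻¹) ^ (1 / (p - 1)) ∂((ν ℓ)⁻¹ • ν.restrict ℓ) := by
  rw [lintegral_smul_measure]
  congr 1
  apply lintegral_congr
  intro y
  have hp1 : p - 1 ≠ 0 := sub_ne_zero.2 hp.ne'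
  have hexp : 1 - p / (p - 1) = -(1 / (p - 1)) := by field_simp; ring
  rw [hexp, ENNReal.rpow_neg, ← ENNReal.inv_rpow]

section Main

variable {N : ℕ} {w : (Fin 2 → ℝ) → ℝ}

lemma ApLoc_le_A1Loc (hN : 1 < N) (hw : LocallyIntegrable w volume)
    (z : Fin 2 → ℤ) (ρ : (Fin 2 → Fin N) → ℝ) (hρ : inGamma N ρ)
    (sel' : (Fin 2 → Fin N) → FaceIdx 2 1) {p : ℝ} (hp : 1 < p) :
    ApLoc 1 N z ρ sel' w p ≤ A1Loc 1 N z ρ sel' w := by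
  refine iSup_mono fun m => ?_
  set ℓ := selFace 1 N z ρ sel' ((N : ℝ)⁻¹) m with hℓ
  have hVpos : 0 < volume ℓ := vol_selFace_pos (by omega) z ρ sel' m (hρ m).1.1
  have hVtop : volume ℓ ≠ ⊤ := (vol_selFace_lt_top z ρ sel' m (by linarith [(hρ m).1.1])).ne
  set μ := (volume ℓ)⁻¹ • volume.restrict ℓ with hμdef
  have hμ : μ Set.univ = 1 := by
    rw [hμdef, Measure.smul_apply, Measure.restrict_apply_univ, smul_eq_mul,
      ENNReal.inv_mul_cancel hVpos.ne' hVtop]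
  have hq : (0:ℝ) < 1 / (p - 1) := by
    have := sub_pos.2 hp; positivity
  rw [essSup_ennreal_smul_measure (μ := volume.restrict ℓ) (c := (volume ℓ)⁻¹)
    (ENNReal.inv_ne_zero.2 hVtop) _ |>.symm]
  rw [integral_eq volume ℓ w hp]
  refine mul_le_mul_right ?_ _
  have h := coreLeEssSup (μ := μ) hμ (fun y => (ENNReal.ofReal (w y))⁻¹) hq
  rwa [one_div_one_div] at h

lemma ApLoc_anti (hN : 1 < N) (hw : LocallyIntegrable w volume)
    (z : Fin 2 → ℤ) (ρ : (Fin 2 → Fin N) → ℝ) (hρ : inGamma N ρ)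
    (sel' : (Fin 2 → Fin N) → FaceIdx 2 1) {p p' : ℝ} (hp : 1 < p) (hpp : p ≤ p') :
    ApLoc 1 N z ρ sel' w p' ≤ ApLoc 1 N z ρ sel' w p := by
  have hp' : 1 < p' := lt_of_lt_of_le hp hpp
  refine iSup_mono fun m => ?_
  set ℓ := selFace 1 N z ρ sel' ((N : ℝ)⁻¹) m with hℓ
  have hVpos : 0 < volume ℓ := vol_selFace_pos (by omega) z ρ sel' m (hρ m).1.1
  have hVtop : volume ℓ ≠ ⊤ := (vol_selFace_lt_top z ρ sel' m (by linarith [(hρ m).1.1])).ne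
  set μ := (volume ℓ)⁻¹ • volume.restrict ℓ with hμdef
  have hμ : μ Set.univ = 1 := by
    rw [hμdef, Measure.smul_apply, Measure.restrict_apply_univ, smul_eq_mul,
      ENNReal.inv_mul_cancel hVpos.ne' hVtop]
  have hgm : AEMeasurable (fun y => (ENNReal.ofReal (w y))⁻¹) μ := by
    rw [hμdef, aemeasurable_smul_measure_iff (ENNReal.inv_ne_zero.2 hVtop)]
    exact (ENNReal.measurable_ofReal.comp_aemeasurable
      hw.aestronglyMeasurable.aemeasurable.restrict).inv
  rw [integral_eq volume ℓ w hp, integral_eq volume ℓ w hp']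
  refine mul_le_mul_right ?_ _
  have h01 : (0:ℝ) < 1 / (p' - 1) := by
    have := sub_pos.2 hp'; positivity
  have h12 : 1 / (p' - 1) ≤ 1 / (p - 1) := by
    have hp1 := sub_pos.2 hp
    gcongr
  have h := coreMono (μ := μ) hμ hgm h01 h12
  rwa [one_div_one_div, one_div_one_div] at h

lemma A1Loc_le_iSup (hN : 1 < N) (hw : LocallyIntegrable w volume)
    (z : Fin 2 → ℤ) (ρ : (Fin 2 → Fin N) → ℝ) (hρ : inGamma N ρ)
    (sel' : (Fin 2 → Fin N) → FaceIdx 2 1) :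
    A1Loc 1 N z ρ sel' w ≤ ⨆ p ∈ Set.Ioi (1:ℝ), ApLoc 1 N z ρ sel' w p := by
  refine iSup_le fun m => ?_
  set ℓ := selFace 1 N z ρ sel' ((N : ℝ)⁻¹) m with hℓ
  have hVpos : 0 < volume ℓ := vol_selFace_pos (by omega) z ρ sel' m (hρ m).1.1
  have hVtop : volume ℓ ≠ ⊤ := (vol_selFace_lt_top z ρ sel' m (by linarith [(hρ m).1.1])).ne
  set μ := (volume ℓ)⁻¹ • volume.restrict ℓ with hμdef
  have hμ : μ Set.univ = 1 := by
    rw [hμdef, Measure.smul_apply, Measure.restrict_apply_univ, smul_eq_mul,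
      ENNReal.inv_mul_cancel hVpos.ne' hVtop]
  have hgm : AEMeasurable (fun y => (ENNReal.ofReal (w y))⁻¹) μ := by
    rw [hμdef, aemeasurable_smul_measure_iff (ENNReal.inv_ne_zero.2 hVtop)]
    exact (ENNReal.measurable_ofReal.comp_aemeasurable
      hw.aestronglyMeasurable.aemeasurable.restrict).inv
  rw [essSup_ennreal_smul_measure (μ := volume.restrict ℓ) (c := (volume ℓ)⁻¹)
    (ENNReal.inv_ne_zero.2 hVtop) _ |>.symm]
  have h := coreEssSupLe (μ := μ) hμ hgm
  calc ((volume ℓ)⁻¹ * ∫⁻ y in gridCell N z m, ENNReal.ofReal (w y)) *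
        essSup (fun y => (ENNReal.ofReal (w y))⁻¹) μ
      ≤ ((volume ℓ)⁻¹ * ∫⁻ y in gridCell N z m, ENNReal.ofReal (w y)) *
        ⨆ p ∈ Set.Ioi (1:ℝ),
          (∫⁻ y, ((ENNReal.ofReal (w y))⁻¹) ^ (1 / (p - 1)) ∂μ) ^ (p - 1) :=
        mul_le_mul_right h _
    _ ≤ ⨆ p ∈ Set.Ioi (1:ℝ), ApLoc 1 N z ρ sel' w p := by
        rw [ENNReal.mul_iSup]
        refine iSup_le fun p => ?_
        rw [ENNReal.mul_iSup]
        refine iSup_le fun hp => ?_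
        refine le_trans ?_ (le_iSup₂ (f := fun p (_ : p ∈ Set.Ioi (1:ℝ)) =>
          ApLoc 1 N z ρ sel' w p) p hp)
        rw [← integral_eq volume ℓ w hp]
        exact le_iSup (fun m' => ((volume (selFace 1 N z ρ sel' ((N : ℝ)⁻¹) m'))⁻¹ *
          ∫⁻ y in gridCell N z m', ENNReal.ofReal (w y)) *
          ((volume (selFace 1 N z ρ sel' ((N : ℝ)⁻¹) m'))⁻¹ *
            ∫⁻ y in selFace 1 N z ρ sel' ((N : ℝ)⁻¹) m',
              ENNReal.ofReal (w y) ^ (1 - p / (p - 1))) ^ (p - 1)) m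

end Main

end Aux

/-- for `w ∈ A^S_1`, `[w]_{A^S_p} → [w]_{A^S_1}` as `p → 1⁺`. -/
theorem ApS_limit (N : ℕ) (hN : 1 < N) (w : (Fin 2 → ℝ) → ℝ) (hw0 : ∀ x, 0 ≤ w x)
    (hw : LocallyIntegrable w volume)
    (sel : (Fin 2 → ℤ) → ((Fin 2 → Fin N) → ℝ) → (Fin 2 → Fin N) → FaceIdx 2 1)
    (h1 : ApGlobal 1 N sel w 1 ≠ ⊤) :
    Filter.Tendsto (fun p => ApGlobal 1 N sel w p) (nhdsWithin 1 (Set.Ioi 1))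
      (nhds (ApGlobal 1 N sel w 1)) := by
  classical
  set F := fun p : ℝ => ApGlobal 1 N sel w p with hF
  have hanti : AntitoneOn F (Set.Ioi (1:ℝ)) := by
    intro p hp p' hp' hpp
    simp only [hF, ApGlobal, if_neg (ne_of_gt (Set.mem_Ioi.1 hp)), if_neg (ne_of_gt (Set.mem_Ioi.1 hp'))]
    exact iSup_mono fun z => iSup_mono fun ρ =>
      ApLoc_anti hN hw z ρ.1 ρ.2 (sel z ρ.1) hp hpp
  have key : (⨆ p ∈ Set.Ioi (1:ℝ), F p) = F 1 := by
    apply le_antisymm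
    · refine iSup₂_le fun p hp => ?_
      simp only [hF, ApGlobal, if_neg (ne_of_gt (Set.mem_Ioi.1 hp)), if_pos rfl]
      exact iSup_mono fun z => iSup_mono fun ρ =>
        ApLoc_le_A1Loc hN hw z ρ.1 ρ.2 (sel z ρ.1) hp
    · have hF1 : F 1 = ⨆ z : Fin 2 → ℤ, ⨆ ρ : {ρ : (Fin 2 → Fin N) → ℝ // inGamma N ρ},
          A1Loc 1 N z ρ.1 (sel z ρ.1) w := by
        simp only [hF, ApGlobal, if_pos rfl]
      rw [hF1]
      refine iSup_le fun z => iSup_le fun ρ => ?_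
      refine le_trans (A1Loc_le_iSup hN hw z ρ.1 ρ.2 (sel z ρ.1)) ?_
      refine iSup₂_mono fun p hp => ?_
      simp only [hF, ApGlobal, if_neg (ne_of_gt (Set.mem_Ioi.1 hp))]
      exact le_iSup_of_le z (le_iSup_of_le ρ le_rfl)
  have htend := hanti.tendsto_nhdsGT (OrderTop.bddAbove _)
  rwa [sSup_image, key] at htend

end
end

section
/- Let 0 < δ < 1 with 1/δ ∈ ℕ, z ∈ ℤ², ρ ∈ Γ, 1 < p < ∞, and let w be a weight on Q_z. Let E_{π₁} = {x_i : the selected side l_i is vertical}, with |E_{π₁}| = v, and relabel the corresponding cells and fattened sides as Q_z(1),…,Q_z(v) and ℓ_1,…,ℓ_v. Suppose there is a constant 0 < K < ∞ such that for every choice of nonnegative numbers b_1,…,b_v with Σ_{i=1}^v b_i^{p'} = 1, setting t_i = (b_i/|ℓ_i|)·(∫_{Q_z(i)} w dx)^{1/p}, one has ‖Σ_{i=1}^v t_i·1_{ℓ_i}‖_{L^{p'}(7Q_z, w^{1−p'})} ≤ K. Then ‖\tilde M_{ρ,δ} f‖_{L^p(Ψ^{−1}(E_{π₁}), w)} ≤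 K·‖f‖_{L^p(7Q_z, w)} for all f, where Ψ^{−1}(E_{π₁}) is the union of the cells Q_z(i) with x_i ∈ E_{π₁}. -/
open MeasureTheory Metric Set
open scoped ENNReal NNReal

noncomputable section

section AuxLemmas

lemma measurableSet_gridCell {n : ℕ} (N : ℕ) (z : Fin n → ℤ) (m : Fin n → Fin N) :
    MeasurableSet (gridCell N z m) := by
  have h : gridCell N z m = ⋂ j, (fun y : Fin n → ℝ => y j) ⁻¹'
      (Set.Ico ((z j : ℝ) + (m j : ℝ) / N) ((z j : ℝ) + ((m j : ℝ) + 1) / N)) := by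
    ext y; simp only [gridCell, Set.mem_setOf_eq, Set.mem_iInter, Set.mem_preimage, Set.mem_Ico]
  rw [h]
  exact MeasurableSet.iInter fun j => (measurable_pi_apply j) measurableSet_Ico

lemma measurableSet_sevenCube {n : ℕ} (z : Fin n → ℤ) : MeasurableSet (sevenCube z) := by
  have h : sevenCube z = ⋂ j, (fun y : Fin n → ℝ => y j) ⁻¹'
      (Set.Icc ((z j : ℝ) + 1/2 - 7/2) ((z j : ℝ) + 1/2 + 7/2)) := by
    ext y
    simp only [sevenCube, Set.mem_setOf_eq, Set.mem_iInter, Set.mem_preimage, Set.mem_Icc]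
    constructor
    · intro h j; have := h j; rw [abs_le] at this; constructor <;> linarith [this.1, this.2]
    · intro h j; rw [abs_le]; have := h j; constructor <;> linarith [this.1, this.2]
  rw [h]
  exact MeasurableSet.iInter fun j => (measurable_pi_apply j) measurableSet_Icc

lemma gridCell_disjoint {n : ℕ} {N : ℕ} (hN : 0 < N) (z : Fin n → ℤ) {m m' : Fin n → Fin N}
    (h : m ≠ m') : Disjoint (gridCell N z m) (gridCell N z m') := by
  rw [Set.disjoint_left]
  intro y hy hy'
  obtain ⟨j, hj⟩ := Function.ne_iff.mp h
  have h1 := hy j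
  have h2 := hy' j
  have hNR : (0:ℝ) < N := by exact_mod_cast hN
  rcases lt_or_gt_of_ne hj with hlt | hlt
  · have : ((m j : ℝ) + 1) ≤ (m' j : ℝ) := by exact_mod_cast Nat.succ_le_of_lt hlt
    have : ((m j : ℝ) + 1)/N ≤ (m' j : ℝ)/N := by gcongr
    linarith [h1.2, h2.1]
  · have : ((m' j : ℝ) + 1) ≤ (m j : ℝ) := by exact_mod_cast Nat.succ_le_of_lt hlt
    have : ((m' j : ℝ) + 1)/N ≤ (m j : ℝ)/N := by gcongr
    linarith [h1.1, h2.2]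

lemma gridCell_subset_Icc {n : ℕ} {N : ℕ} (hN : 0 < N) (z : Fin n → ℤ) (m : Fin n → Fin N) :
    gridCell N z m ⊆ Set.Icc (fun j => (z j : ℝ)) (fun j => (z j : ℝ) + 1) := by
  intro y hy
  constructor
  · intro j
    show (z j : ℝ) ≤ y j
    have := (hy j).1
    have h0 : (0:ℝ) ≤ (m j : ℝ) / N := by positivity
    linarith
  · intro j
    show y j ≤ (z j : ℝ) + 1
    have := (hy j).2
    have hNR : (0:ℝ) < N := by exact_mod_cast hN
    have h1 : ((m j : ℝ) + 1) / N ≤ 1 := by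
      rw [div_le_one hNR]
      have : (m j : ℕ) + 1 ≤ N := (m j).2
      exact_mod_cast this
    linarith

lemma measurableSet_selFace {n : ℕ} (k N : ℕ) (z : Fin n → ℤ) (ρ : (Fin n → Fin N) → ℝ)
    (sel : (Fin n → Fin N) → FaceIdx n k) (δ' : ℝ) (m : Fin n → Fin N) :
    MeasurableSet (selFace k N z ρ sel δ' m) :=
  (Metric.isClosed_cthickening).measurableSet

lemma selFace_subset_sevenCube {n : ℕ} {k N : ℕ} (hN : 1 < N) (z : Fin n → ℤ)
    {ρ : (Fin n → Fin N) → ℝ} (hρ : inGamma N ρ)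
    (sel : (Fin n → Fin N) → FaceIdx n k) {δ' : ℝ} (hδ' : δ' = (N : ℝ)⁻¹) (m : Fin n → Fin N) :
    selFace k N z ρ sel δ' m ⊆ sevenCube z := by
  intro y hy
  have hNR : (0:ℝ) < N := by exact_mod_cast Nat.lt_of_lt_of_le Nat.zero_lt_one hN.le
  have hδpos : 0 < δ' := by rw [hδ']; positivity
  have hδle : δ' ≤ 1 := by
    rw [hδ', inv_le_one_iff₀]
    right; exact_mod_cast hN.le
  intro j
  rw [abs_le]
  have key : ∀ ε : ℝ, 0 < ε → |y j - ((z j : ℝ) + 1/2)| ≤ 7/2 + ε := by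
    intro ε hε
    have h1 : EMetric.infEdist y (kFace k (gridCenter N z m) (ρ m) (sel m)) ≤
        ENNReal.ofReal δ' := hy
    have h2 : EMetric.infEdist y (kFace k (gridCenter N z m) (ρ m) (sel m)) <
        ENNReal.ofReal (δ' + ε) := by
      refine lt_of_le_of_lt h1 (ENNReal.ofReal_lt_ofReal_iff (by linarith)|>.mpr (by linarith))
    obtain ⟨x, hxS, hxd⟩ := EMetric.infEdist_lt_iff.mp h2
    have hdist : dist y x < δ' + ε := by
      rw [← edist_lt_ofReal]; exact hxd
    have hj : |y j - x j| ≤ dist y x := by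
      rw [← Real.dist_eq]; exact dist_le_pi_dist y x j
    have hr1 : (1:ℝ) ≤ ρ m := (hρ m).1.1
    have hr2 : ρ m ≤ 2 := (hρ m).1.2
    have hx_c : |x j - gridCenter N z m j| ≤ ρ m := by
      by_cases hjT : j ∈ (sel m).1.1
      · exact hxS.1 j hjT
      · rw [hxS.2 j hjT]
        split_ifs <;> rw [abs_le] <;> constructor <;> linarith
    have hc : |gridCenter N z m j - ((z j : ℝ) + 1/2)| ≤ 1/2 := by
      simp only [gridCenter]
      have h0 : (0:ℝ) ≤ ((m j : ℝ) + 1/2)/N := by positivity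
      have h1' : ((m j : ℝ) + 1/2)/N ≤ 1 := by
        rw [div_le_one hNR]
        have : (m j : ℕ) + 1 ≤ N := (m j).2
        have : ((m j : ℕ) : ℝ) + 1 ≤ (N:ℝ) := by exact_mod_cast this
        linarith
      rw [abs_le]; constructor <;> linarith
    calc |y j - ((z j : ℝ) + 1/2)| ≤ |y j - x j| + |x j - gridCenter N z m j| +
          |gridCenter N z m j - ((z j : ℝ) + 1/2)| := by
          calc |y j - ((z j:ℝ)+1/2)| = |(y j - x j) + (x j - gridCenter N z m j) +
              (gridCenter N z m j - ((z j:ℝ)+1/2))| := by ring_nf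
            _ ≤ _ := by
              refine le_trans (abs_add_le _ _) ?_
              gcongr
              exact abs_add_le _ _
      _ ≤ (δ' + ε) + 2 + 1/2 := by gcongr <;> linarith
      _ ≤ 7/2 + ε := by linarith
  exact abs_le.mp (le_of_forall_pos_le_add key)

lemma wQ_lt_top {n : ℕ} {N : ℕ} (hN : 0 < N) (z : Fin n → ℤ) (m : Fin n → Fin N)
    {w : (Fin n → ℝ) → ℝ} (hw : MeasureTheory.LocallyIntegrable w MeasureTheory.volume) :
    ∫⁻ y in gridCell N z m, ENNReal.ofReal (w y) < ⊤ := by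
  have hint : MeasureTheory.IntegrableOn w (gridCell N z m) MeasureTheory.volume :=
    (hw.integrableOn_isCompact isCompact_Icc).mono_set (gridCell_subset_Icc hN z m)
  have hfin := hint.2
  rw [MeasureTheory.HasFiniteIntegral] at hfin
  refine lt_of_le_of_lt (MeasureTheory.lintegral_mono fun y => ?_) hfin
  exact Real.ofReal_le_enorm (w y)

end AuxLemmas

/-- from an `L^{p'}(7Q_z, w^{1-p'})` bound for all admissible sums of
indicators of the selected vertical fattened sides, one obtains the `L^p(w)` bound for the
linearized skeleton maximal operator on `Ψ⁻¹(E_{π₁})`. -/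
theorem dual_to_maximal (N : ℕ) (hN : 1 < N) (δ : ℝ) (hδ : δ = (N : ℝ)⁻¹)
    (z : Fin 2 → ℤ) (ρ : (Fin 2 → Fin N) → ℝ) (hρ : inGamma N ρ)
    (sel : (Fin 2 → Fin N) → FaceIdx 2 1) (p : ℝ) (hp : 1 < p)
    (w : (Fin 2 → ℝ) → ℝ) (hw0 : ∀ x, 0 ≤ w x) (hw : LocallyIntegrable w volume)
    (K : ℝ) (hK : 0 < K)
    (hdual : ∀ b : (Fin 2 → Fin N) → ℝ, (∀ m, 0 ≤ b m) →
      (∑ m ∈ Finset.univ.filter (fun m => (sel m).1.1 = ({1} : Finset (Fin 2))),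
          b m ^ (p / (p - 1)) = 1) →
      eLpNorm
        (fun y => ∑ m ∈ Finset.univ.filter (fun m => (sel m).1.1 = ({1} : Finset (Fin 2))),
          b m / (volume (selFace 1 N z ρ sel δ m)).toReal *
            (∫ x in gridCell N z m, w x) ^ (1 / p) *
            Set.indicator (selFace 1 N z ρ sel δ m) (fun _ => (1 : ℝ)) y)
        (ENNReal.ofReal (p / (p - 1)))
        ((volume.withDensity fun y => ENNReal.ofReal (w y) ^ (1 - p / (p - 1))).restrict
          (sevenCube z)) ≤ ENNReal.ofReal K) :
    ∀ f : (Fin 2 → ℝ) → ℝ,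
      eLpNorm (linMax 1 N z ρ sel δ f) (ENNReal.ofReal p)
          ((wMeasure w).restrict
            (⋃ m ∈ Finset.univ.filter (fun m => (sel m).1.1 = ({1} : Finset (Fin 2))),
              gridCell N z m)) ≤
        ENNReal.ofReal K *
          eLpNorm f (ENNReal.ofReal p) ((wMeasure w).restrict (sevenCube z)) := by
  classical
  intro f
  have hp0 : 0 < p := lt_trans one_pos hp
  have hpq : p.HolderConjugate (p / (p - 1)) := Real.HolderConjugate.conjExponent hp
  set q : ℝ := p / (p - 1) with hqdef
  have hq1 : 1 < q := hpq.symm.lt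
  have hq0 : 0 < q := hpq.symm.pos
  have hN0 : 0 < N := Nat.lt_of_lt_of_le Nat.zero_lt_one hN.le
  set V : Finset (Fin 2 → Fin N) :=
    Finset.univ.filter (fun m => (sel m).1.1 = ({1} : Finset (Fin 2))) with hVdef
  set ℓ : (Fin 2 → Fin N) → Set (Fin 2 → ℝ) := fun m => selFace 1 N z ρ sel δ m with hℓdef
  set W : (Fin 2 → ℝ) → ℝ≥0∞ := fun y => ENNReal.ofReal (w y) with hWdef
  set A : (Fin 2 → Fin N) → ℝ :=
    fun m => (volume (ℓ m)).toReal⁻¹ * ∫ y in ℓ m, f y with hAdef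
  set wQ : (Fin 2 → Fin N) → ℝ≥0∞ := fun m => ∫⁻ y in gridCell N z m, W y with hwQdef
  have hℓmeas : ∀ m, MeasurableSet (ℓ m) := fun m => measurableSet_selFace 1 N z ρ sel δ m
  have hℓ7 : ∀ m, ℓ m ⊆ sevenCube z := fun m => selFace_subset_sevenCube hN z hρ sel hδ m
  have hwQlt : ∀ m, wQ m < ⊤ := fun m => wQ_lt_top hN0 z m hw
  have hwQtop : ∀ m, wQ m ≠ ⊤ := fun m => (hwQlt m).ne
  have hofp0 : (ENNReal.ofReal p) ≠ 0 := by
    simp only [ne_eq, ENNReal.ofReal_eq_zero, not_le]; exact hp0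
  have hofq0 : (ENNReal.ofReal q) ≠ 0 := by
    simp only [ne_eq, ENNReal.ofReal_eq_zero, not_le]; exact hq0
  -- Step A : compute the LHS
  have hlin : ∀ m ∈ V, ∀ x ∈ gridCell N z m, linMax 1 N z ρ sel δ f x = A m := by
    intro m _ x hx
    show (∑ m' : Fin 2 → Fin N, Set.indicator (gridCell N z m')
      (fun _ => (volume (selFace 1 N z ρ sel δ m')).toReal⁻¹ *
        ∫ y in selFace 1 N z ρ sel δ m', f y) x) = A m
    rw [Finset.sum_eq_single_of_mem m (Finset.mem_univ m) (fun m' _ hm' => ?_)]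
    · rw [Set.indicator_of_mem hx]
    · apply Set.indicator_of_notMem
      exact fun hx' => (Set.disjoint_left.mp (gridCell_disjoint hN0 z hm') hx') hx
  have stepA : eLpNorm (linMax 1 N z ρ sel δ f) (ENNReal.ofReal p)
      ((wMeasure w).restrict (⋃ m ∈ V, gridCell N z m)) =
      (∑ m ∈ V, (‖A m‖₊ : ℝ≥0∞) ^ p * wQ m) ^ (1/p) := by
    rw [eLpNorm_eq_lintegral_rpow_enorm_toReal hofp0 ENNReal.ofReal_ne_top,
      ENNReal.toReal_ofReal hp0.le]
    simp only [enorm_eq_nnnorm]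
    congr 1
    rw [lintegral_biUnion_finset (fun m _ m' _ h => gridCell_disjoint hN0 z h)
      (fun m _ => measurableSet_gridCell N z m)]
    refine Finset.sum_congr rfl fun m hm => ?_
    rw [setLIntegral_congr_fun (measurableSet_gridCell N z m)
      (fun x hx => by rw [hlin m hm x hx])]
    rw [lintegral_const, Measure.restrict_apply MeasurableSet.univ, Set.univ_inter]
    congr 1
    show (volume.withDensity fun x => ENNReal.ofReal (w x)) (gridCell N z m) = wQ m
    rw [withDensity_apply _ (measurableSet_gridCell N z m)]
  rw [stepA]
  set S : ℝ≥0∞ := ∑ m ∈ V, (‖A m‖₊ : ℝ≥0∞) ^ p * wQ m with hSdef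
  have hStop : S ≠ ⊤ := by
    refine (ENNReal.sum_lt_top.mpr fun m _ => ?_).ne
    exact ENNReal.mul_lt_top
      (ENNReal.rpow_lt_top_of_nonneg hp0.le ENNReal.coe_ne_top) (hwQlt m)
  by_cases hS0 : S = 0
  · rw [hS0, ENNReal.zero_rpow_of_pos (by positivity)]
    exact zero_le
  -- main case
  set s : ℝ := S.toReal with hsdef
  have hs0 : 0 < s := ENNReal.toReal_pos hS0 hStop
  set c : (Fin 2 → Fin N) → ℝ := fun m => ‖A m‖ * (wQ m).toReal ^ (1/p) with hcdef
  have hc0 : ∀ m, 0 ≤ c m := fun m =>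
    mul_nonneg (norm_nonneg _) (Real.rpow_nonneg ENNReal.toReal_nonneg _)
  have hcp : ∀ m, c m ^ p = ‖A m‖ ^ p * (wQ m).toReal := by
    intro m
    rw [hcdef]
    rw [Real.mul_rpow (norm_nonneg _) (Real.rpow_nonneg ENNReal.toReal_nonneg _),
      ← Real.rpow_mul ENNReal.toReal_nonneg, one_div, inv_mul_cancel₀ hp0.ne', Real.rpow_one]
  have hsum : ∑ m ∈ V, c m ^ p = s := by
    rw [hsdef, hSdef, ENNReal.toReal_sum (fun m _ => ENNReal.mul_ne_top
      (ENNReal.rpow_ne_top_of_nonneg hp0.le ENNReal.coe_ne_top) (hwQtop m))]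
    refine Finset.sum_congr rfl fun m _ => ?_
    rw [hcp m, ENNReal.toReal_mul, ← ENNReal.toReal_rpow, ENNReal.coe_toReal, coe_nnnorm]
  set t : ℝ := s ^ (1/q) with htdef
  have ht0 : 0 < t := Real.rpow_pos_of_pos hs0 _
  set b : (Fin 2 → Fin N) → ℝ := fun m => if m ∈ V then c m ^ (p-1) / t else 0 with hbdef
  have hb0 : ∀ m, 0 ≤ b m := by
    intro m
    rw [hbdef]
    dsimp only
    split_ifs
    · exact div_nonneg (Real.rpow_nonneg (hc0 m) _) ht0.le
    · exact le_refl 0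
  have hbV : ∀ m ∈ V, b m = c m ^ (p-1) / t := by
    intro m hm
    rw [hbdef]
    dsimp only
    rw [if_pos hm]
  have htq : t ^ q = s := by
    rw [htdef, ← Real.rpow_mul hs0.le, one_div, inv_mul_cancel₀ hq0.ne', Real.rpow_one]
  have hbq : ∑ m ∈ V, b m ^ q = 1 := by
    have h1 : ∀ m ∈ V, b m ^ q = c m ^ p / s := by
      intro m hm
      rw [hbV m hm, Real.div_rpow (Real.rpow_nonneg (hc0 m) _) ht0.le,
        ← Real.rpow_mul (hc0 m), hpq.sub_one_mul_conj, htq]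
    rw [Finset.sum_congr rfl h1, ← Finset.sum_div, hsum, div_self hs0.ne']
  have hbc : ∑ m ∈ V, b m * c m = s ^ (1/p) := by
    have hstep : ∀ m ∈ V, b m * c m = c m ^ p / t := by
      intro m hm
      rw [hbV m hm, div_mul_eq_mul_div]
      congr 1
      rcases eq_or_lt_of_le (hc0 m) with h | h
      · rw [← h, Real.zero_rpow (by intro hc'; linarith : p - 1 ≠ 0),
          Real.zero_rpow hp0.ne', zero_mul]
      · rw [← Real.rpow_add_one h.ne', sub_add_cancel]
    have h1p : (1:ℝ)/p = 1 - 1/q := by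
      have h := hpq.inv_add_inv_eq_one
      rw [one_div, one_div]
      linarith
    rw [Finset.sum_congr rfl hstep, ← Finset.sum_div, hsum, htdef, h1p,
      Real.rpow_sub hs0, Real.rpow_one]
  -- apply the duality hypothesis
  have hKb := hdual b hb0 hbq
  have hwint : ∀ m, ∫ x in gridCell N z m, w x = (wQ m).toReal := by
    intro m
    rw [integral_eq_lintegral_of_nonneg_ae (Filter.Eventually.of_forall fun x => hw0 x)
      hw.aestronglyMeasurable.restrict]
  set coeff : (Fin 2 → Fin N) → ℝ :=
    fun m => b m / (volume (ℓ m)).toReal * (∫ x in gridCell N z m, w x) ^ (1 / p)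
    with hcoeffdef
  have hcoeff0 : ∀ m, 0 ≤ coeff m := by
    intro m
    apply mul_nonneg (div_nonneg (hb0 m) ENNReal.toReal_nonneg)
    exact Real.rpow_nonneg (integral_nonneg fun x => hw0 x) _
  -- truncation of f
  set T : Finset (Fin 2 → Fin N) := V.filter (fun m => IntegrableOn f (ℓ m) volume) with hTdef
  set U : Set (Fin 2 → ℝ) := ⋃ m ∈ T, ℓ m with hUdef
  have hUmeas : MeasurableSet U := T.measurableSet_biUnion fun m _ => hℓmeas m
  have hUint : IntegrableOn f U volume := by
    rw [hUdef, integrableOn_finset_iUnion]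
    intro m hm
    exact (Finset.mem_filter.mp hm).2
  set F : (Fin 2 → ℝ) → ℝ := U.indicator f with hFdef
  have hFint : Integrable F volume := hUint.integrable_indicator hUmeas
  have hFmeas : AEStronglyMeasurable F volume := hFint.aestronglyMeasurable
  have hFle : ∀ y, ‖F y‖₊ ≤ ‖f y‖₊ := by
    intro y
    rw [hFdef]
    by_cases hy : y ∈ U
    · rw [Set.indicator_of_mem hy]
    · rw [Set.indicator_of_notMem hy]; simp
  have hFf : ∀ m ∈ T, ∀ y ∈ ℓ m, F y = f y := by
    intro m hm y hy
    rw [hFdef, Set.indicator_of_mem]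
    exact Set.mem_biUnion hm hy
  -- the key pointwise-dual estimate
  have key1 : ∀ m ∈ V, ENNReal.ofReal (b m * c m) ≤
      ENNReal.ofReal (coeff m) * ∫⁻ y in ℓ m, (‖F y‖₊ : ℝ≥0∞) := by
    intro m hmV
    by_cases hbm : b m = 0
    · have : coeff m = 0 := by rw [hcoeffdef]; dsimp only; rw [hbm, zero_div, zero_mul]
      rw [hbm, zero_mul, ENNReal.ofReal_zero]
      exact zero_le
    have hcm : c m ≠ 0 := by
      intro h
      apply hbm
      rw [hbV m hmV, h, Real.zero_rpow (by intro hc'; linarith : p - 1 ≠ 0), zero_div]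
    have hAm : A m ≠ 0 := by
      intro h
      apply hcm
      rw [hcdef]
      dsimp only
      rw [h, norm_zero, zero_mul]
    have hfint : IntegrableOn f (ℓ m) volume := by
      by_contra hni
      apply hAm
      rw [hAdef]
      dsimp only
      rw [integral_undef hni, mul_zero]
    have hmT : m ∈ T := by rw [hTdef]; exact Finset.mem_filter.mpr ⟨hmV, hfint⟩
    have hAle : ‖A m‖ ≤ (volume (ℓ m)).toReal⁻¹ * ∫ y in ℓ m, ‖f y‖ := by
      rw [hAdef]
      dsimp only
      calc ‖(volume (ℓ m)).toReal⁻¹ * ∫ y in ℓ m, f y‖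
          = (volume (ℓ m)).toReal⁻¹ * ‖∫ y in ℓ m, f y‖ := by
            rw [norm_mul, Real.norm_eq_abs ((volume (ℓ m)).toReal⁻¹),
              abs_of_nonneg (inv_nonneg.mpr ENNReal.toReal_nonneg)]
        _ ≤ _ := mul_le_mul_of_nonneg_left (norm_integral_le_integral_norm f)
              (inv_nonneg.mpr ENNReal.toReal_nonneg)
    have hble : b m * c m ≤ coeff m * ∫ y in ℓ m, ‖f y‖ := by
      have h1 : c m ≤ ((volume (ℓ m)).toReal⁻¹ * ∫ y in ℓ m, ‖f y‖) * (wQ m).toReal ^ (1/p) := by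
        rw [hcdef]
        exact mul_le_mul_of_nonneg_right hAle (Real.rpow_nonneg ENNReal.toReal_nonneg _)
      calc b m * c m ≤ b m * (((volume (ℓ m)).toReal⁻¹ * ∫ y in ℓ m, ‖f y‖) *
            (wQ m).toReal ^ (1/p)) := mul_le_mul_of_nonneg_left h1 (hb0 m)
        _ = coeff m * ∫ y in ℓ m, ‖f y‖ := by
            rw [hcoeffdef]
            dsimp only
            rw [hwint m]
            ring
    calc ENNReal.ofReal (b m * c m) ≤ ENNReal.ofReal (coeff m * ∫ y in ℓ m, ‖f y‖) :=
          ENNReal.ofReal_le_ofReal hble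
      _ = ENNReal.ofReal (coeff m) * ENNReal.ofReal (∫ y in ℓ m, ‖f y‖) :=
          ENNReal.ofReal_mul (hcoeff0 m)
      _ = ENNReal.ofReal (coeff m) * ∫⁻ y in ℓ m, (‖f y‖₊ : ℝ≥0∞) := by
          rw [ofReal_integral_norm_eq_lintegral_enorm hfint]
          rfl
      _ = ENNReal.ofReal (coeff m) * ∫⁻ y in ℓ m, (‖F y‖₊ : ℝ≥0∞) := by
          congr 1
          refine setLIntegral_congr_fun (hℓmeas m) (fun y hy => ?_)
          rw [hFf m hmT y hy]
  -- the dual test function, as an ℝ≥0∞-valued function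
  set G : (Fin 2 → ℝ) → ℝ≥0∞ :=
    fun y => ∑ m ∈ V, ENNReal.ofReal (coeff m) * (ℓ m).indicator (fun _ => (1:ℝ≥0∞)) y
    with hGdef
  have hGmeas : Measurable G := by
    apply Finset.measurable_sum
    intro m _
    exact (measurable_const.indicator (hℓmeas m)).const_mul _
  have hg'G : ∀ y,
      (‖∑ m ∈ V, coeff m * Set.indicator (ℓ m) (fun _ => (1:ℝ)) y‖₊ : ℝ≥0∞) = G y := by
    intro y
    have hnn : ∀ m ∈ V, 0 ≤ coeff m * Set.indicator (ℓ m) (fun _ => (1:ℝ)) y := by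
      intro m _
      exact mul_nonneg (hcoeff0 m) (Set.indicator_nonneg (fun _ _ => zero_le_one) y)
    rw [← enorm_eq_nnnorm, Real.enorm_eq_ofReal (Finset.sum_nonneg hnn), ENNReal.ofReal_sum_of_nonneg hnn,
      hGdef]
    refine Finset.sum_congr rfl fun m _ => ?_
    by_cases hy : y ∈ ℓ m
    · rw [Set.indicator_of_mem hy, Set.indicator_of_mem hy, mul_one, mul_one]
    · rw [Set.indicator_of_notMem hy, Set.indicator_of_notMem hy, mul_zero, mul_zero,
        ENNReal.ofReal_zero]
  -- chain 1 : duality sum bounded by integral against G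
  have chain1 : ENNReal.ofReal (s ^ (1/p)) ≤
      ∫⁻ y in sevenCube z, G y * (‖F y‖₊ : ℝ≥0∞) ∂volume := by
    rw [← hbc, ENNReal.ofReal_sum_of_nonneg (fun m _ => mul_nonneg (hb0 m) (hc0 m))]
    calc ∑ m ∈ V, ENNReal.ofReal (b m * c m)
        ≤ ∑ m ∈ V, ENNReal.ofReal (coeff m) * ∫⁻ y in ℓ m, (‖F y‖₊ : ℝ≥0∞) :=
          Finset.sum_le_sum key1
      _ = ∑ m ∈ V, ∫⁻ y in sevenCube z,
            ENNReal.ofReal (coeff m) * (ℓ m).indicator (fun x => ((‖F x‖₊ : ℝ≥0∞))) y := by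
          refine Finset.sum_congr rfl fun m _ => ?_
          rw [lintegral_const_mul' _ _ ENNReal.ofReal_ne_top]
          congr 1
          rw [lintegral_indicator (hℓmeas m), Measure.restrict_restrict (hℓmeas m),
            Set.inter_eq_self_of_subset_left (hℓ7 m)]
      _ = ∫⁻ y in sevenCube z, ∑ m ∈ V,
            ENNReal.ofReal (coeff m) * (ℓ m).indicator (fun x => ((‖F x‖₊ : ℝ≥0∞))) y := by
          refine (lintegral_finset_sum' V fun m _ => ?_).symm
          exact (hFmeas.restrict.enorm.indicator (hℓmeas m)).const_mul _
      _ = ∫⁻ y in sevenCube z, G y * (‖F y‖₊ : ℝ≥0∞) := by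
          refine lintegral_congr fun y => ?_
          rw [hGdef, Finset.sum_mul]
          refine Finset.sum_congr rfl fun m _ => ?_
          by_cases hy : y ∈ ℓ m
          · rw [Set.indicator_of_mem hy, Set.indicator_of_mem hy, mul_one]
          · simp [Set.indicator_of_notMem hy]
  -- measurable representative of the weight
  have hwmeas : AEMeasurable w volume := hw.aestronglyMeasurable.aemeasurable
  set w' : (Fin 2 → ℝ) → ℝ := hwmeas.mk w with hw'def
  have hw'meas : Measurable w' := hwmeas.measurable_mk
  have hw'ae : w =ᵐ[volume] w' := hwmeas.ae_eq_mk
  set W' : (Fin 2 → ℝ) → ℝ≥0∞ := fun y => ENNReal.ofReal (w' y) with hW'def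
  have hW'meas : Measurable W' := ENNReal.measurable_ofReal.comp hw'meas
  have hWW' : W =ᵐ[volume] W' := hw'ae.fun_comp ENNReal.ofReal
  have hwd : wMeasure w = volume.withDensity W' := by
    have : wMeasure w = volume.withDensity W := rfl
    rw [this]
    exact withDensity_congr_ae hWW'
  -- rewrite the dual hypothesis
  have hdens : (fun y => W y ^ (1 - q)) =ᵐ[volume] (fun y => W' y ^ (1 - q)) :=
    hWW'.mono fun y hy => by dsimp only; rw [hy]
  have hKbW : eLpNorm
      (fun y => ∑ m ∈ V, coeff m * Set.indicator (ℓ m) (fun _ => (1 : ℝ)) y)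
      (ENNReal.ofReal q)
      ((volume.withDensity fun y => W' y ^ (1 - q)).restrict (sevenCube z)) ≤
      ENNReal.ofReal K := by
    rw [← withDensity_congr_ae hdens]
    exact hKb
  have hKb2 : (∫⁻ y in sevenCube z, W' y ^ (1-q) * G y ^ q ∂volume) ^ (1/q) ≤
      ENNReal.ofReal K := by
    refine le_trans (le_of_eq ?_) hKbW
    rw [eLpNorm_eq_lintegral_rpow_enorm_toReal hofq0 ENNReal.ofReal_ne_top,
      ENNReal.toReal_ofReal hq0.le]
    simp only [enorm_eq_nnnorm]
    congr 1
    rw [restrict_withDensity (measurableSet_sevenCube z),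
      lintegral_withDensity_eq_lintegral_mul₀ ((hW'meas.pow_const (1-q)).aemeasurable)
        (((hGmeas.pow_const q).aemeasurable).congr ?_)]
    · refine lintegral_congr fun y => ?_
      simp only [Pi.mul_apply]
      rw [hg'G y]
    · refine Filter.Eventually.of_forall fun y => ?_
      dsimp only
      rw [hg'G y]
  have hfinq : ∫⁻ y in sevenCube z, W' y ^ (1-q) * G y ^ q ∂volume ≠ ⊤ := by
    have h1 : ∫⁻ y in sevenCube z, W' y ^ (1-q) * G y ^ q ∂volume ≤ (ENNReal.ofReal K) ^ q := by
      have h2 := ENNReal.rpow_le_rpow hKb2 hq0.le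
      rwa [← ENNReal.rpow_mul, one_div, inv_mul_cancel₀ hq0.ne', ENNReal.rpow_one] at h2
    exact (lt_of_le_of_lt h1 (ENNReal.rpow_lt_top_of_nonneg hq0.le ENNReal.ofReal_ne_top)).ne
  have hae0 : ∀ᵐ y ∂(volume.restrict (sevenCube z)), W' y = 0 → G y = 0 := by
    have hmeas : Measurable fun y => W' y ^ (1-q) * G y ^ q :=
      (hW'meas.pow_const _).mul (hGmeas.pow_const _)
    filter_upwards [ae_lt_top hmeas hfinq] with y hy hW0
    by_contra hG0
    have hGq : G y ^ q ≠ 0 := by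
      simp only [ne_eq, ENNReal.rpow_eq_zero_iff, not_or]
      constructor
      · rintro ⟨h1, -⟩; exact hG0 h1
      · rintro ⟨-, h2⟩; linarith
    rw [hW0, ENNReal.zero_rpow_of_neg (by linarith), ENNReal.top_mul hGq] at hy
    exact lt_irrefl _ hy
  -- Hölder
  set φ : (Fin 2 → ℝ) → ℝ≥0∞ := fun y => (‖F y‖₊ : ℝ≥0∞) * W' y ^ (1/p) with hφdef
  set ψ : (Fin 2 → ℝ) → ℝ≥0∞ := fun y => G y * W' y ^ (-(1/p)) with hψdef
  have hφmeas : AEMeasurable φ (volume.restrict (sevenCube z)) :=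
    hFmeas.restrict.enorm.mul (hW'meas.pow_const _).aemeasurable
  have hψmeas : AEMeasurable ψ (volume.restrict (sevenCube z)) :=
    ((hGmeas.mul (hW'meas.pow_const _)).aemeasurable)
  have hptwise : ∀ᵐ y ∂(volume.restrict (sevenCube z)),
      G y * (‖F y‖₊ : ℝ≥0∞) ≤ (φ * ψ) y := by
    filter_upwards [hae0] with y hy
    simp only [Pi.mul_apply, hφdef, hψdef]
    by_cases hW0 : W' y = 0
    · rw [hy hW0]
      simp
    · have hWt : W' y ≠ ⊤ := ENNReal.ofReal_ne_top
      have hcancel : W' y ^ (1/p) * W' y ^ (-(1/p)) = 1 := by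
        rw [← ENNReal.rpow_add _ _ hW0 hWt, add_neg_cancel, ENNReal.rpow_zero]
      have heq : (↑‖F y‖₊ * W' y ^ (1/p)) * (G y * W' y ^ (-(1/p))) =
          (G y * ↑‖F y‖₊) * (W' y ^ (1/p) * W' y ^ (-(1/p))) := by ring
      rw [heq, hcancel, mul_one]
  have holder := ENNReal.lintegral_mul_le_Lp_mul_Lq (volume.restrict (sevenCube z)) hpq
    hφmeas hψmeas
  have hfactor1 : (∫⁻ y in sevenCube z, φ y ^ p ∂volume) ^ (1/p) ≤
      eLpNorm f (ENNReal.ofReal p) ((wMeasure w).restrict (sevenCube z)) := by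
    rw [eLpNorm_eq_lintegral_rpow_enorm_toReal hofp0 ENNReal.ofReal_ne_top,
      ENNReal.toReal_ofReal hp0.le]
    simp only [enorm_eq_nnnorm]
    refine ENNReal.rpow_le_rpow ?_ (by positivity)
    have hφp : ∀ y, φ y ^ p = W' y * (‖F y‖₊ : ℝ≥0∞) ^ p := by
      intro y
      rw [hφdef]
      dsimp only
      rw [ENNReal.mul_rpow_of_nonneg _ _ hp0.le, ← ENNReal.rpow_mul,
        one_div, inv_mul_cancel₀ hp0.ne', ENNReal.rpow_one, mul_comm]
    calc ∫⁻ y in sevenCube z, φ y ^ p ∂volume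
        = ∫⁻ y in sevenCube z, W' y * (‖F y‖₊:ℝ≥0∞) ^ p ∂volume :=
          lintegral_congr fun y => hφp y
      _ = ∫⁻ y, (‖F y‖₊:ℝ≥0∞) ^ p ∂((wMeasure w).restrict (sevenCube z)) := by
          rw [hwd, restrict_withDensity (measurableSet_sevenCube z),
            lintegral_withDensity_eq_lintegral_mul₀ hW'meas.aemeasurable
              (g := fun y => (‖F y‖₊ : ℝ≥0∞) ^ p) (hFmeas.restrict.enorm.pow_const _)]
          rfl
      _ ≤ ∫⁻ y, (‖f y‖₊:ℝ≥0∞) ^ p ∂((wMeasure w).restrict (sevenCube z)) := by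
          refine lintegral_mono fun y => ENNReal.rpow_le_rpow ?_ hp0.le
          exact_mod_cast hFle y
  have hexp : (-(1/p)) * q = 1 - q := by
    have h1 : 1/p = 1 - 1/q := by
      have h := hpq.inv_add_inv_eq_one
      rw [one_div, one_div]
      linarith
    have h2 : 1/q * q = 1 := div_mul_cancel₀ 1 hq0.ne'
    rw [h1]
    nlinarith [h2]
  have hfactor2 : (∫⁻ y in sevenCube z, ψ y ^ q ∂volume) ^ (1/q) ≤ ENNReal.ofReal K := by
    have hψq : ∀ y, ψ y ^ q = W' y ^ (1-q) * G y ^ q := by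
      intro y
      rw [hψdef]
      dsimp only
      rw [ENNReal.mul_rpow_of_nonneg _ _ hq0.le, ← ENNReal.rpow_mul, hexp, mul_comm]
    calc (∫⁻ y in sevenCube z, ψ y ^ q ∂volume) ^ (1/q)
        = (∫⁻ y in sevenCube z, W' y ^ (1-q) * G y ^ q ∂volume) ^ (1/q) := by
          rw [lintegral_congr fun y => hψq y]
      _ ≤ ENNReal.ofReal K := hKb2
  -- assemble everything
  have hSs : S ^ (1/p) = ENNReal.ofReal (s ^ (1/p)) := by
    rw [← ENNReal.ofReal_rpow_of_nonneg hs0.le (by positivity : (0:ℝ) ≤ 1/p), hsdef,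
      ENNReal.ofReal_toReal hStop]
  rw [hSs]
  calc ENNReal.ofReal (s ^ (1/p))
      ≤ ∫⁻ y in sevenCube z, G y * (‖F y‖₊ : ℝ≥0∞) ∂volume := chain1
    _ ≤ ∫⁻ y in sevenCube z, (φ * ψ) y ∂volume := lintegral_mono_ae hptwise
    _ ≤ (∫⁻ y in sevenCube z, φ y ^ p ∂volume) ^ (1/p) *
        (∫⁻ y in sevenCube z, ψ y ^ q ∂volume) ^ (1/q) := holder
    _ ≤ eLpNorm f (ENNReal.ofReal p) ((wMeasure w).restrict (sevenCube z)) *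
        ENNReal.ofReal K := mul_le_mul' hfactor1 hfactor2
    _ = ENNReal.ofReal K * eLpNorm f (ENNReal.ofReal p) ((wMeasure w).restrict (sevenCube z)) :=
        mul_comm _ _

end
end
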